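/- arXiv:1710.04967 — 7 statements merged into one kernel-verified Lean document; each statement's English description precedes it below -/
import Mathlib

section
/- The q-binomial theorem: for complex a, z, q with |z| < 1 and |q| < 1, the series ∑_{k=0}^∞ ((a;q)_k / (q;q)_k) z^k converges to (az; q)_∞ / (z; q)_∞. -/
set_option maxHeartbeats 1000000


/-- The finite q-Pochhammer symbol `(a;q)_n = ∏_{j=0}^{n-1} (1 - a q^j)`. -/
noncomputable def qPoch (a q : ℂ) (n : ℕ) : ℂ :=
  ∏ j ∈ Finset.range n, (1 - a * q ^ j)

/-- The infinite q-Pochhammer symbol `(a;q)_∞ = ∏_{j=0}^∞ (1 - a q^j)`. -/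
noncomputable def qPochInf (a q : ℂ) : ℂ :=
  ∏' j : ℕ, (1 - a * q ^ j)

open Filter

private lemma factor_ne {w q : ℂ} (hw : ‖w‖ < 1) (hq : ‖q‖ < 1) (j : ℕ) :
    1 - w * q ^ j ≠ 0 := by
  intro h
  have h1 : w * q ^ j = 1 := by linear_combination -h
  have h2 : ‖w * q ^ j‖ < 1 := by
    rw [norm_mul, norm_pow]
    nlinarith [pow_le_one₀ (norm_nonneg q) hq.le (n := j), norm_nonneg w,
      pow_nonneg (norm_nonneg q) j]
  rw [h1] at h2
  simp at h2

private lemma summable_log (w q : ℂ) (hq : ‖q‖ < 1) :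
    Summable fun j : ℕ => Complex.log (1 - w * q ^ j) := by
  have hq0 : (0:ℝ) ≤ ‖q‖ := norm_nonneg q
  have ht : Tendsto (fun n : ℕ => ‖w‖ * ‖q‖ ^ n) atTop (nhds 0) := by
    simpa using (tendsto_pow_atTop_nhds_zero_of_lt_one hq0 hq).const_mul ‖w‖
  obtain ⟨N, hN⟩ := eventually_atTop.1 (ht.eventually (gt_mem_nhds (by norm_num : (0:ℝ) < 1/2)))
  rw [← summable_nat_add_iff N]
  apply Summable.of_norm_bounded (g := fun j => 3/2 * (‖w‖ * ‖q‖ ^ N * ‖q‖ ^ j))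
  · exact ((summable_geometric_of_lt_one hq0 hq).mul_left _).mul_left _
  · intro j
    have hb : ‖-(w * q ^ (j + N))‖ ≤ 1/2 := by
      rw [norm_neg, norm_mul, norm_pow]
      have h1 : ‖q‖ ^ (j + N) ≤ ‖q‖ ^ N := pow_le_pow_of_le_one hq0 hq.le (by omega)
      have h2 := hN N le_rfl
      nlinarith [norm_nonneg w, pow_nonneg hq0 (j + N), pow_nonneg hq0 N]
    have := Complex.norm_log_one_add_half_le_self hb
    rw [show (1 : ℂ) + -(w * q ^ (j + N)) = 1 - w * q ^ (j + N) by ring] at this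
    apply this.trans
    rw [norm_neg, norm_mul, norm_pow, pow_add]
    ring_nf
    nlinarith [pow_nonneg hq0 j, pow_nonneg hq0 N, norm_nonneg w]

private lemma hasProd_qPochInf (w q : ℂ) (hq : ‖q‖ < 1) :
    HasProd (fun j : ℕ => 1 - w * q ^ j) (qPochInf w q) := by
  by_cases h : ∀ j : ℕ, 1 - w * q ^ j ≠ 0
  · exact (Complex.hasProd_of_hasSum_log (f := fun j : ℕ => 1 - w * q ^ j)
      h (summable_log w q hq).hasSum).multipliable.hasProd
  · push_neg at h
    obtain ⟨j0, hj0⟩ := h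
    have h0 : HasProd (fun j : ℕ => 1 - w * q ^ j) 0 := by
      have hev : (fun s : Finset ℕ => ∏ j ∈ s, (1 - w * q ^ j)) =ᶠ[atTop]
          (fun _ => (0 : ℂ)) := by
        filter_upwards [eventually_ge_atTop ({j0} : Finset ℕ)] with s hs
        exact Finset.prod_eq_zero (hs (Finset.mem_singleton_self j0)) hj0
      exact Tendsto.congr' hev.symm tendsto_const_nhds
    have : qPochInf w q = 0 := h0.tprod_eq
    rw [this]
    exact h0

private lemma tendsto_qPoch (w q : ℂ) (hq : ‖q‖ < 1) :
    Tendsto (fun n => qPoch w q n) atTop (nhds (qPochInf w q)) :=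
  (hasProd_qPochInf w q hq).tendsto_prod_nat

private lemma qPochInf_ne_zero (w q : ℂ) (hq : ‖q‖ < 1) (h : ∀ j : ℕ, 1 - w * q ^ j ≠ 0) :
    qPochInf w q ≠ 0 := by
  have := Complex.cexp_tsum_eq_tprod (f := fun j : ℕ => 1 - w * q ^ j)
    h (summable_log w q hq)
  rw [qPochInf, ← this]
  exact Complex.exp_ne_zero _

private lemma qPochQ_ne_zero (q : ℂ) (hq : ‖q‖ < 1) (k : ℕ) : qPoch q q k ≠ 0 := by
  rw [qPoch]
  exact Finset.prod_ne_zero_iff.mpr fun j _ => factor_ne hq hq j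

private lemma qPoch_abs_le (w q : ℂ) (hq : ‖q‖ < 1) (k : ℕ) :
    ‖qPoch w q k‖ ≤ Real.exp (‖w‖ * (1 - ‖q‖)⁻¹) := by
  have hq0 : (0:ℝ) ≤ ‖q‖ := norm_nonneg q
  rw [qPoch]
  calc ‖∏ j ∈ Finset.range k, (1 - w * q ^ j)‖
      ≤ ∏ j ∈ Finset.range k, ‖1 - w * q ^ j‖ := le_of_eq (norm_prod _ _)
    _ ≤ ∏ j ∈ Finset.range k, Real.exp (‖w‖ * ‖q‖ ^ j) := by
        apply Finset.prod_le_prod (fun j _ => norm_nonneg _)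
        intro j _
        calc ‖1 - w * q ^ j‖ ≤ ‖(1:ℂ)‖ + ‖w * q ^ j‖ := norm_sub_le _ _
          _ = ‖w‖ * ‖q‖ ^ j + 1 := by rw [norm_mul, norm_pow, norm_one]; ring
          _ ≤ Real.exp (‖w‖ * ‖q‖ ^ j) := Real.add_one_le_exp _
    _ = Real.exp (∑ j ∈ Finset.range k, ‖w‖ * ‖q‖ ^ j) := (Real.exp_sum _ _).symm
    _ ≤ Real.exp (‖w‖ * (1 - ‖q‖)⁻¹) := by
        apply Real.exp_le_exp.mpr
        rw [← Finset.mul_sum]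
        apply mul_le_mul_of_nonneg_left _ (norm_nonneg w)
        have hs := Summable.sum_le_tsum (Finset.range k) (fun i _ => pow_nonneg hq0 i)
          (summable_geometric_of_lt_one hq0 hq)
        rwa [tsum_geometric_of_lt_one hq0 hq] at hs

private lemma qPoch_lb (q : ℂ) (hq : ‖q‖ < 1) :
    ∃ δ : ℝ, 0 < δ ∧ ∀ k, δ ≤ ‖qPoch q q k‖ := by
  have hL : qPochInf q q ≠ 0 := qPochInf_ne_zero q q hq (factor_ne hq hq)
  have hLpos : 0 < ‖qPochInf q q‖ := norm_pos_iff.mpr hL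
  have ht : Tendsto (fun n => ‖qPoch q q n‖) atTop (nhds ‖qPochInf q q‖) :=
    (tendsto_qPoch q q hq).norm
  have hev : ∀ᶠ n in atTop, ‖qPochInf q q‖ / 2 ≤ ‖qPoch q q n‖ :=
    ht.eventually_const_le (half_lt_self hLpos)
  obtain ⟨N, hN⟩ := eventually_atTop.1 hev
  have hne : (Finset.range (N + 1)).Nonempty := ⟨0, by simp⟩
  refine ⟨min (‖qPochInf q q‖ / 2) ((Finset.range (N + 1)).inf' hne fun k => ‖qPoch q q k‖),
    ?_, ?_⟩
  · apply lt_min (by positivity)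
    rw [Finset.lt_inf'_iff]
    exact fun i _ => norm_pos_iff.mpr (qPochQ_ne_zero q hq i)
  · intro k
    rcases le_or_gt N k with h | h
    · exact le_trans (min_le_left _ _) (hN k h)
    · exact le_trans (min_le_right _ _)
        (Finset.inf'_le _ (Finset.mem_range.mpr (by omega)))

private lemma summable_series (a q : ℂ) (hq : ‖q‖ < 1) {u : ℂ} (hu : ‖u‖ < 1) :
    Summable fun k : ℕ => qPoch a q k / qPoch q q k * u ^ k := by
  obtain ⟨δ, hδ, hδle⟩ := qPoch_lb q hq
  apply Summable.of_norm_bounded (g := fun k => Real.exp (‖a‖ * (1 - ‖q‖)⁻¹) / δ * ‖u‖ ^ k)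
  · exact (summable_geometric_of_lt_one (norm_nonneg u) hu).mul_left _
  · intro k
    rw [norm_mul, norm_div, norm_pow]
    apply mul_le_mul_of_nonneg_right _ (pow_nonneg (norm_nonneg u) k)
    exact div_le_div₀ (Real.exp_pos _).le (qPoch_abs_le a q hq k) hδ (hδle k)

private lemma c_rec (a q : ℂ) (hq : ‖q‖ < 1) (k : ℕ) :
    qPoch a q (k + 1) / qPoch q q (k + 1) * (1 - q * q ^ k) =
      qPoch a q k / qPoch q q k * (1 - a * q ^ k) := by
  have h1 := qPochQ_ne_zero q hq k
  have h2 : (1 - q * q ^ k) ≠ 0 := factor_ne hq hq k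
  rw [show qPoch a q (k + 1) = qPoch a q k * (1 - a * q ^ k) by
      rw [qPoch, qPoch, Finset.prod_range_succ],
    show qPoch q q (k + 1) = qPoch q q k * (1 - q * q ^ k) by
      rw [qPoch, qPoch, Finset.prod_range_succ]]
  rw [div_mul_eq_mul_div, mul_div_mul_right _ _ h2]
  ring

private lemma func_eq (a q : ℂ) (hq : ‖q‖ < 1) {w : ℂ} (hw : ‖w‖ < 1) :
    (1 - w) * ∑' k : ℕ, qPoch a q k / qPoch q q k * w ^ k =
      (1 - a * w) * ∑' k : ℕ, qPoch a q k / qPoch q q k * (q * w) ^ k := by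
  have hqw : ‖q * w‖ < 1 := by
    rw [norm_mul]
    nlinarith [norm_nonneg q, norm_nonneg w]
  have hs1 : Summable fun k : ℕ => qPoch a q k / qPoch q q k * w ^ k :=
    summable_series a q hq hw
  have hs2 : Summable fun k : ℕ => qPoch a q k / qPoch q q k * (q * w) ^ k :=
    summable_series a q hq hqw
  have hsv1 : Summable fun k : ℕ => w * (qPoch a q k / qPoch q q k * w ^ k) := hs1.mul_left w
  have hsv2 : Summable fun k : ℕ => (a * w) * (qPoch a q k / qPoch q q k * (q * w) ^ k) :=
    hs2.mul_left (a * w)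
  have hsu : Summable fun k : ℕ =>
      qPoch a q k / qPoch q q k * w ^ k - qPoch a q k / qPoch q q k * (q * w) ^ k :=
    hs1.sub hs2
  have hdiff : w * (∑' k : ℕ, qPoch a q k / qPoch q q k * w ^ k)
      - (a * w) * (∑' k : ℕ, qPoch a q k / qPoch q q k * (q * w) ^ k)
      = ∑' k : ℕ, (w * (qPoch a q k / qPoch q q k * w ^ k)
          - (a * w) * (qPoch a q k / qPoch q q k * (q * w) ^ k)) := by
    rw [Summable.tsum_sub hsv1 hsv2, tsum_mul_left, tsum_mul_left]
  have hueq : ∀ k : ℕ, w * (qPoch a q k / qPoch q q k * w ^ k)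
      - (a * w) * (qPoch a q k / qPoch q q k * (q * w) ^ k)
      = qPoch a q (k + 1) / qPoch q q (k + 1) * w ^ (k + 1)
        - qPoch a q (k + 1) / qPoch q q (k + 1) * (q * w) ^ (k + 1) := by
    intro k
    linear_combination (-(w ^ (k + 1))) * c_rec a q hq k
  have e := Summable.tsum_eq_zero_add hsu
  have h0 : qPoch a q 0 / qPoch q q 0 * w ^ 0 - qPoch a q 0 / qPoch q q 0 * (q * w) ^ 0
      = 0 := by simp [qPoch]
  simp only [h0, zero_add] at e
  have main : (∑' k : ℕ, qPoch a q k / qPoch q q k * w ^ k)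
      - (∑' k : ℕ, qPoch a q k / qPoch q q k * (q * w) ^ k)
      = w * (∑' k : ℕ, qPoch a q k / qPoch q q k * w ^ k)
        - (a * w) * (∑' k : ℕ, qPoch a q k / qPoch q q k * (q * w) ^ k) := by
    rw [hdiff, tsum_congr hueq, ← e, Summable.tsum_sub hs1 hs2]
  linear_combination main

private lemma F_tendsto_one (a z q : ℂ) (hz : ‖z‖ < 1) (hq : ‖q‖ < 1) :
    Tendsto (fun n : ℕ => ∑' k : ℕ, qPoch a q k / qPoch q q k * (q ^ n * z) ^ k)
      atTop (nhds 1) := by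
  obtain ⟨δ, hδ, hδle⟩ := qPoch_lb q hq
  set M : ℝ := Real.exp (‖a‖ * (1 - ‖q‖)⁻¹) / δ with hM
  have hMpos : 0 < M := div_pos (Real.exp_pos _) hδ
  have hq0 : (0:ℝ) ≤ ‖q‖ := norm_nonneg q
  have hcb : ∀ k, ‖qPoch a q k / qPoch q q k‖ ≤ M := fun k => by
    rw [norm_div]
    exact div_le_div₀ (Real.exp_pos _).le (qPoch_abs_le a q hq k) hδ (hδle k)
  have key : ∀ n : ℕ, ‖(∑' k : ℕ, qPoch a q k / qPoch q q k * (q ^ n * z) ^ k) - 1‖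
      ≤ M * (1 - ‖z‖)⁻¹ * (‖q‖ ^ n * ‖z‖) := by
    intro n
    have hwn : ‖q ^ n * z‖ ≤ ‖z‖ := by
      rw [norm_mul, norm_pow]
      nlinarith [pow_le_one₀ hq0 hq.le (n := n), norm_nonneg z, pow_nonneg hq0 n]
    have hwn1 : ‖q ^ n * z‖ < 1 := lt_of_le_of_lt hwn hz
    have hs := summable_series a q hq hwn1
    have hs' : Summable fun k : ℕ =>
        qPoch a q (k + 1) / qPoch q q (k + 1) * (q ^ n * z) ^ (k + 1) :=
      (summable_nat_add_iff 1).mpr hs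
    have e := Summable.tsum_eq_zero_add hs
    have h0 : qPoch a q 0 / qPoch q q 0 * (q ^ n * z) ^ 0 = 1 := by simp [qPoch]
    simp only [h0] at e
    rw [e, add_sub_cancel_left]
    calc ‖∑' k : ℕ, qPoch a q (k + 1) / qPoch q q (k + 1) * (q ^ n * z) ^ (k + 1)‖
        ≤ ∑' k : ℕ, ‖qPoch a q (k + 1) / qPoch q q (k + 1) * (q ^ n * z) ^ (k + 1)‖ :=
          norm_tsum_le_tsum_norm hs'.norm
      _ ≤ ∑' k : ℕ, M * (‖q‖ ^ n * ‖z‖) * ‖z‖ ^ k := by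
          apply Summable.tsum_le_tsum _ hs'.norm
            (((summable_geometric_of_lt_one (norm_nonneg z) hz).mul_left _))
          intro k
          rw [norm_mul, norm_pow]
          have h1 : ‖(q ^ n * z)‖ ^ (k + 1) ≤ (‖q‖ ^ n * ‖z‖) * ‖z‖ ^ k := by
            rw [pow_succ, norm_mul, norm_pow]
            have h2 := pow_le_pow_left₀ (norm_nonneg _) hwn k
            rw [norm_mul, norm_pow] at h2
            nlinarith [mul_le_mul_of_nonneg_right h2
              (mul_nonneg (pow_nonneg hq0 n) (norm_nonneg z))]
          calc ‖qPoch a q (k + 1) / qPoch q q (k + 1)‖ * ‖q ^ n * z‖ ^ (k + 1)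
              ≤ M * ((‖q‖ ^ n * ‖z‖) * ‖z‖ ^ k) := by
                apply mul_le_mul (hcb _) h1 (pow_nonneg (norm_nonneg _) _) hMpos.le
            _ = M * (‖q‖ ^ n * ‖z‖) * ‖z‖ ^ k := by ring
      _ = M * (1 - ‖z‖)⁻¹ * (‖q‖ ^ n * ‖z‖) := by
          rw [tsum_mul_left, tsum_geometric_of_lt_one (norm_nonneg z) hz]
          ring
  rw [← tendsto_sub_nhds_zero_iff]
  apply squeeze_zero_norm key
  have : Tendsto (fun n : ℕ => ‖q‖ ^ n) atTop (nhds 0) :=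
    tendsto_pow_atTop_nhds_zero_of_lt_one hq0 hq
  have h2 : Tendsto (fun n : ℕ => M * (1 - ‖z‖)⁻¹ * (‖q‖ ^ n * ‖z‖)) atTop
      (nhds (M * (1 - ‖z‖)⁻¹ * (0 * ‖z‖))) := ((this.mul_const ‖z‖).const_mul _)
  simpa using h2

/-- The q-binomial theorem: for `|z| < 1` and `|q| < 1`,
`∑_{k=0}^∞ ((a;q)_k/(q;q)_k) z^k = (az;q)_∞/(z;q)_∞`. -/
theorem q_binomial_theorem (a z q : ℂ) (hz : ‖z‖ < 1)
    (hq : ‖q‖ < 1) :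
    ∑' k : ℕ, (qPoch a q k / qPoch q q k) * z ^ k =
      qPochInf (a * z) q / qPochInf z q := by
  have hz' : ‖z‖ < 1 := hz
  have hq' : ‖q‖ < 1 := hq
  set F : ℂ → ℂ := fun w => ∑' k : ℕ, qPoch a q k / qPoch q q k * w ^ k with hF
  have hiter : ∀ n : ℕ, F z * qPoch z q n = qPoch (a * z) q n * F (q ^ n * z) := by
    intro n
    induction n with
    | zero => simp [qPoch]
    | succ n ih =>
      have hn : ‖q ^ n * z‖ < 1 := by
        rw [norm_mul, norm_pow]
        nlinarith [pow_le_one₀ (norm_nonneg q) hq'.le (n := n), norm_nonneg z,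
          pow_nonneg (norm_nonneg q) n]
      have hfe := func_eq a q hq' hn
      have harg : q * (q ^ n * z) = q ^ (n + 1) * z := by ring
      rw [harg] at hfe
      have hfe' : (1 - q ^ n * z) * F (q ^ n * z)
          = (1 - a * (q ^ n * z)) * F (q ^ (n + 1) * z) := hfe
      rw [show qPoch z q (n + 1) = qPoch z q n * (1 - z * q ^ n) by
          rw [qPoch, qPoch, Finset.prod_range_succ],
        show qPoch (a * z) q (n + 1) = qPoch (a * z) q n * (1 - (a * z) * q ^ n) by
          rw [qPoch, qPoch, Finset.prod_range_succ]]
      linear_combination (1 - z * q ^ n) * ih + qPoch (a * z) q n * hfe'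
  have hF1 : Tendsto (fun n : ℕ => F (q ^ n * z)) atTop (nhds 1) :=
    F_tendsto_one a z q hz' hq'
  have h1 : Tendsto (fun n : ℕ => F z * qPoch z q n) atTop
      (nhds (F z * qPochInf z q)) := (tendsto_qPoch z q hq').const_mul _
  have h2 : Tendsto (fun n : ℕ => qPoch (a * z) q n * F (q ^ n * z)) atTop
      (nhds (qPochInf (a * z) q * 1)) := (tendsto_qPoch (a * z) q hq').mul hF1
  have heq : F z * qPochInf z q = qPochInf (a * z) q * 1 :=
    tendsto_nhds_unique (h1.congr hiter) h2
  have hne : qPochInf z q ≠ 0 := qPochInf_ne_zero z q hq' (factor_ne hz' hq')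
  rw [eq_div_iff hne]
  simpa using heq
end

section
/- The q-Cesàro polynomial g_n^{(s)}(z;q) := ((q^{s+1};q)_n / (q;q)_n) · ∑_{k=0}^n ((q^{-n};q)_k (q;q)_k / ((q^{-s-n};q)_k (q;q)_k)) z^k equals ∑_{k=0}^n [k+s choose s]_q (z q^s)^{n-k}, where [m choose r]_q = (q;q)_m / ((q;q)_r (q;q)_{m-r}) is the q-binomial coefficient. -/
/-- The q-binomial coefficient `[m choose r]_q = (q;q)_m/((q;q)_r (q;q)_{m-r})`. -/
noncomputable def qBinom (q : ℂ) (m r : ℕ) : ℂ :=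
  qPoch q q m / (qPoch q q r * qPoch q q (m - r))

lemma qPoch_succ (a q : ℂ) (n : ℕ) : qPoch a q (n+1) = qPoch a q n * (1 - a * q ^ n) :=
  Finset.prod_range_succ _ _

lemma qPoch_add (a q : ℂ) (m n : ℕ) :
    qPoch a q (m + n) = qPoch a q m * qPoch (a * q ^ m) q n := by
  unfold qPoch
  rw [Finset.prod_range_add]
  congr 1
  refine Finset.prod_congr rfl fun j _ => ?_
  rw [pow_add]; ring

lemma key (q : ℂ) (hq : q ≠ 0) (hden : ∀ k : ℕ, qPoch q q k ≠ 0)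
    (s n : ℕ) : ∀ k, k ≤ n →
    qPoch (q ^ (s+1)) q n * qPoch (q ^ (-(n:ℤ))) q k * (qPoch q q s * qPoch q q (n-k))
      = qPoch q q (n-k+s) * (qPoch q q n * qPoch (q ^ (-(s+n:ℤ))) q k * q ^ (s*k)) := by
  intro k
  induction k with
  | zero =>
    intro _
    simp only [qPoch_succ, Nat.sub_zero, mul_zero, pow_zero]
    have h1 : qPoch q q (n + s) = qPoch q q s * qPoch (q ^ (s+1)) q n := by
      rw [add_comm n s, qPoch_add]
      congr 2
      rw [pow_succ']
    simp only [qPoch]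
    simp only [Finset.range_zero, Finset.prod_empty]
    show qPoch (q ^ (s+1)) q n * 1 * (qPoch q q s * qPoch q q n)
      = qPoch q q (n+s) * (qPoch q q n * 1 * 1)
    rw [h1]; ring
  | succ k ih =>
    intro hk
    have hk' : k ≤ n := Nat.le_of_succ_le hk
    obtain ⟨m, hm⟩ : ∃ m, n - k = m + 1 := ⟨n - (k+1), by omega⟩
    have hmk : n - (k+1) = m := by omega
    have hnk : (n : ℤ) = m + 1 + k := by omega
    -- nonzero factor to cancel
    have hfac : (1 : ℂ) - q * q ^ m ≠ 0 := by
      have := hden (m+1)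
      rw [qPoch_succ] at this
      exact fun h => this (by rw [h, mul_zero])
    have e1 : q ^ (-(n:ℤ)) * q ^ k = (q ^ (m+1))⁻¹ := by
      rw [← zpow_natCast q k, ← zpow_natCast q (m+1), ← zpow_neg, ← zpow_add₀ hq]
      congr 1
      omega
    have e2 : q ^ (-((s:ℤ)+n)) * q ^ k = (q ^ (m+1+s))⁻¹ := by
      rw [← zpow_natCast q k, ← zpow_natCast q (m+1+s), ← zpow_neg, ← zpow_add₀ hq]
      congr 1
      push_cast
      omega
    have scalar : (1 - q * q ^ (m+s)) * (1 - q ^ (-(n:ℤ)) * q ^ k)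
        = (1 - q * q ^ m) * (1 - q ^ (-((s:ℤ)+n)) * q ^ k) * q ^ s := by
      rw [e1, e2]
      have h1 : q ^ (m+1) ≠ 0 := pow_ne_zero _ hq
      have h2 : q ^ (m+1+s) ≠ 0 := pow_ne_zero _ hq
      field_simp
      ring
    apply mul_left_cancel₀ hfac
    have ihe := ih hk'
    rw [hm] at ihe
    rw [hmk, qPoch_succ, qPoch_succ]
    have hms : m + 1 + s = (m + s) + 1 := by omega
    rw [hms, qPoch_succ] at ihe
    calc (1 - q * q ^ m) *
        (qPoch (q ^ (s+1)) q n * (qPoch (q ^ (-(n:ℤ))) q k * (1 - q ^ (-(n:ℤ)) * q ^ k)) *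
          (qPoch q q s * qPoch q q m))
        = (qPoch (q ^ (s+1)) q n * qPoch (q ^ (-(n:ℤ))) q k *
            (qPoch q q s * (qPoch q q m * (1 - q * q ^ m)))) * (1 - q ^ (-(n:ℤ)) * q ^ k) := by
          ring
      _ = (qPoch q q (m+s) * (1 - q * q ^ (m+s)) *
            (qPoch q q n * qPoch (q ^ (-((s:ℤ)+n))) q k * q ^ (s*k))) *
            (1 - q ^ (-(n:ℤ)) * q ^ k) := by
          rw [ihe, show qPoch q q (m+s+1) = qPoch q q (m+s) * (1 - q * q ^ (m+s)) from
            qPoch_succ q q (m+s)]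
      _ = (qPoch q q (m+s) * (qPoch q q n * qPoch (q ^ (-((s:ℤ)+n))) q k * q ^ (s*k))) *
            ((1 - q * q ^ (m+s)) * (1 - q ^ (-(n:ℤ)) * q ^ k)) := by ring
      _ = (1 - q * q ^ m) *
            (qPoch q q (m+s) *
              (qPoch q q n * (qPoch (q ^ (-((s:ℤ)+n))) q k * (1 - q ^ (-((s:ℤ)+n)) * q ^ k)) *
                q ^ (s*(k+1)))) := by
          rw [scalar]
          rw [Nat.mul_succ, pow_add]
          ring

/-- The q-Cesàro polynomial, expressed as a basic hypergeometric sum, equals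
`∑_{k=0}^n [k+s choose s]_q (z q^s)^{n-k}`. -/
theorem qCesaro_eq (q z : ℂ) (hq0 : 0 < ‖q‖) (hq1 : ‖q‖ < 1)
    (s n : ℕ)
    (hden : ∀ k : ℕ, qPoch q q k ≠ 0)
    (hden' : ∀ k : ℕ, k ≤ n → qPoch (q ^ (-(s + n : ℤ))) q k ≠ 0) :
    (qPoch (q ^ (s + 1)) q n / qPoch q q n) *
        ∑ k ∈ Finset.range (n + 1),
          (qPoch (q ^ (-(n : ℤ))) q k * qPoch q q k /
            (qPoch (q ^ (-(s + n : ℤ))) q k * qPoch q q k)) * z ^ k =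
      ∑ k ∈ Finset.range (n + 1), qBinom q (k + s) s * (z * q ^ s) ^ (n - k) := by
  have hq : q ≠ 0 := by
    intro h; rw [h] at hq0; simp at hq0
  rw [← Finset.sum_range_reflect (fun k => qBinom q (k + s) s * (z * q ^ s) ^ (n - k)) (n+1)]
  rw [Finset.mul_sum]
  refine Finset.sum_congr rfl fun k hk => ?_
  have hkn : k ≤ n := by
    simp only [Finset.mem_range] at hk; omega
  have h1 : n + 1 - 1 - k = n - k := by omega
  have h2 : n - (n - k) = k := by omega
  rw [h1, h2]
  have hkey := key q hq hden s n k hkn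
  have hb : qBinom q (n - k + s) s = qPoch q q (n-k+s) / (qPoch q q s * qPoch q q (n-k)) := by
    unfold qBinom
    rw [Nat.add_sub_cancel]
  rw [hb, mul_pow, ← pow_mul, mul_comm s k]
  set P := qPoch (q ^ (s+1)) q n with hP
  set A := qPoch (q ^ (-(n:ℤ))) q k with hA
  set B := qPoch (q ^ (-((s:ℤ)+n))) q k with hB
  set Qn := qPoch q q n with hQn
  set Qk := qPoch q q k with hQk
  set S := qPoch q q s with hS
  set Nk := qPoch q q (n-k) with hNk
  set T := qPoch q q (n-k+s) with hT
  have h3 : Qn ≠ 0 := hden n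
  have h4 : Qk ≠ 0 := hden k
  have h5 : S ≠ 0 := hden s
  have h6 : Nk ≠ 0 := hden (n-k)
  have h7 : B ≠ 0 := hden' k hkn
  field_simp
  linear_combination z ^ k * hkey
end

section
/- For complex q with 0 < |q| < 1, complex numbers w and z, and complex t with |t| < 1 and |zt| < 1, the q-Sylvester polynomials φ_n(z;q) := (z^n/(q;q)_n) ∑_{k=0}^n ((q^{-n};q)_k (w;q)_k / (q;q)_k) (-1)^k q^{k(k-1)/2} (q^n/z)^k satisfy ∑_{n=0}^∞ φ_n(z;q) t^n = (w t; q)_∞ / ((t;q)_∞ · (zt;q)_∞), where w plays the role of q^z. -/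
open Finset Filter Topology

/-- The q-Sylvester polynomial
`φ_n(z;q) = ∑_{k=0}^n ((w;q)_k/((q;q)_k (q;q)_{n-k})) z^{n-k}`,
where `w` plays the role of `q^z`. -/
noncomputable def qSylvester (q w z : ℂ) (n : ℕ) : ℂ :=
  ∑ k ∈ Finset.range (n + 1),
    (qPoch w q k / (qPoch q q k * qPoch q q (n - k))) * z ^ (n - k)

lemma abs_qPoch_le {q : ℂ} (hq1 : ‖q‖ < 1) (a : ℂ) (n : ℕ) :
    ‖qPoch a q n‖ ≤ Real.exp (‖a‖ * (1 - ‖q‖)⁻¹) := by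
  rw [qPoch, norm_prod]
  have h1 : ∀ j ∈ Finset.range n,
      ‖1 - a * q ^ j‖ ≤ Real.exp (‖a‖ * ‖q‖ ^ j) := by
    intro j _
    calc ‖1 - a * q ^ j‖ ≤ ‖(1:ℂ)‖ + ‖a * q ^ j‖ := by
          simpa using norm_sub_le 1 (a * q ^ j)
      _ = ‖a‖ * ‖q‖ ^ j + 1 := by
          simp [norm_mul, norm_pow]; ring
      _ ≤ Real.exp (‖a‖ * ‖q‖ ^ j) := Real.add_one_le_exp _
  calc (∏ j ∈ Finset.range n, ‖1 - a * q ^ j‖)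
      ≤ ∏ j ∈ Finset.range n, Real.exp (‖a‖ * ‖q‖ ^ j) :=
        Finset.prod_le_prod (fun j _ => (norm_nonneg _)) h1
    _ = Real.exp (∑ j ∈ Finset.range n, ‖a‖ * ‖q‖ ^ j) :=
        (Real.exp_sum _ _).symm
    _ ≤ Real.exp (‖a‖ * (1 - ‖q‖)⁻¹) := by
        apply Real.exp_le_exp.2
        rw [← Finset.mul_sum]
        apply mul_le_mul_of_nonneg_left _ (norm_nonneg a)
        calc (∑ j ∈ Finset.range n, ‖q‖ ^ j)
            ≤ ∑' j : ℕ, ‖q‖ ^ j :=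
              Summable.sum_le_tsum _ (fun j _ => by positivity)
                (summable_geometric_of_lt_one (norm_nonneg q) hq1)
          _ = (1 - ‖q‖)⁻¹ := tsum_geometric_of_lt_one (norm_nonneg q) hq1

lemma prod_one_sub_ge {q : ℂ} (hq1 : ‖q‖ < 1)
    (x : ℝ) (hx0 : 0 ≤ x) (hx1 : x < 1) (n : ℕ) :
    Real.exp (-(x * ((1 - x)⁻¹ * (1 - ‖q‖)⁻¹))) ≤
      ∏ j ∈ Finset.range n, (1 - x * ‖q‖ ^ j) := by
  have hq0 : (0:ℝ) ≤ ‖q‖ := norm_nonneg q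
  have h1x0 : (0:ℝ) < 1 - x := by linarith
  have key : ∀ j : ℕ, Real.exp (-(x * ‖q‖ ^ j * (1 - x)⁻¹)) ≤ 1 - x * ‖q‖ ^ j := by
    intro j
    set y := x * ‖q‖ ^ j with hy
    have hy0 : 0 ≤ y := by positivity
    have hyx : y ≤ x := by
      have : ‖q‖ ^ j ≤ 1 := pow_le_one₀ hq0 hq1.le
      calc y = x * ‖q‖ ^ j := rfl
        _ ≤ x * 1 := by nlinarith
        _ = x := mul_one x
    have hy1 : y < 1 := lt_of_le_of_lt hyx hx1
    have h1x : 0 < 1 - x := by linarith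
    have h1y : 0 < 1 - y := by linarith
    have e1 : 1 + y * (1 - x)⁻¹ ≤ Real.exp (y * (1 - x)⁻¹) := by
      have := Real.add_one_le_exp (y * (1 - x)⁻¹); linarith
    have h5 : (1 - y)⁻¹ = 1 + y * (1 - y)⁻¹ := by field_simp; ring
    have e2 : (1 - y)⁻¹ ≤ 1 + y * (1 - x)⁻¹ := by
      have h3 : y * (1 - y)⁻¹ ≤ y * (1 - x)⁻¹ :=
        mul_le_mul_of_nonneg_left (inv_anti₀ h1x (by linarith)) hy0
      rw [h5]; linarith
    have e3 : (1 - y)⁻¹ ≤ Real.exp (y * (1 - x)⁻¹) := le_trans e2 e1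
    calc Real.exp (-(y * (1 - x)⁻¹)) = (Real.exp (y * (1 - x)⁻¹))⁻¹ := by
          rw [Real.exp_neg]
      _ ≤ ((1 - y)⁻¹)⁻¹ := inv_anti₀ (by positivity) e3
      _ = 1 - y := inv_inv _
  calc Real.exp (-(x * ((1 - x)⁻¹ * (1 - ‖q‖)⁻¹)))
      ≤ Real.exp (∑ j ∈ Finset.range n, -(x * ‖q‖ ^ j * (1 - x)⁻¹)) := by
        apply Real.exp_le_exp.2
        rw [Finset.sum_neg_distrib]
        apply neg_le_neg
        calc (∑ j ∈ Finset.range n, x * ‖q‖ ^ j * (1 - x)⁻¹)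
            = (x * (1 - x)⁻¹) * ∑ j ∈ Finset.range n, ‖q‖ ^ j := by
              rw [Finset.mul_sum]; apply Finset.sum_congr rfl; intro j _; ring
          _ ≤ (x * (1 - x)⁻¹) * (1 - ‖q‖)⁻¹ := by
              apply mul_le_mul_of_nonneg_left _ (mul_nonneg hx0 (inv_nonneg.2 h1x0.le))
              calc (∑ j ∈ Finset.range n, ‖q‖ ^ j)
                  ≤ ∑' j : ℕ, ‖q‖ ^ j :=
                    Summable.sum_le_tsum _ (fun j _ => by positivity)
                      (summable_geometric_of_lt_one hq0 hq1)
                _ = (1 - ‖q‖)⁻¹ := tsum_geometric_of_lt_one hq0 hq1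
          _ = x * ((1 - x)⁻¹ * (1 - ‖q‖)⁻¹) := by ring
    _ = ∏ j ∈ Finset.range n, Real.exp (-(x * ‖q‖ ^ j * (1 - x)⁻¹)) :=
        Real.exp_sum _ _
    _ ≤ ∏ j ∈ Finset.range n, (1 - x * ‖q‖ ^ j) :=
        Finset.prod_le_prod (fun j _ => (Real.exp_pos _).le) (fun j _ => key j)

lemma abs_qPoch_ge {q : ℂ} (hq1 : ‖q‖ < 1) {a : ℂ} (ha : ‖a‖ < 1) (n : ℕ) :
    Real.exp (-(‖a‖ * ((1 - ‖a‖)⁻¹ * (1 - ‖q‖)⁻¹))) ≤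
      ‖qPoch a q n‖ := by
  rw [qPoch, norm_prod]
  refine le_trans (prod_one_sub_ge hq1 (‖a‖) (norm_nonneg a) ha n) ?_
  apply Finset.prod_le_prod
  · intro j _
    have h1 : ‖a‖ * ‖q‖ ^ j ≤ ‖a‖ := by
      have h2 : ‖q‖ ^ j ≤ 1 := pow_le_one₀ (norm_nonneg q) hq1.le
      nlinarith [norm_nonneg a]
    linarith
  · intro j _
    have := norm_sub_norm_le (1 : ℂ) (a * q ^ j)
    simpa [norm_mul, norm_pow] using this

lemma qPoch_q_ne_zero {q : ℂ} (hq1 : ‖q‖ < 1) (n : ℕ) : qPoch q q n ≠ 0 := by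
  rw [qPoch]
  apply Finset.prod_ne_zero_iff.2
  intro j _
  intro h
  have h2 : q * q ^ j = 1 := by linear_combination -h
  have h3 : ‖q * q ^ j‖ = 1 := by rw [h2]; simp
  rw [norm_mul, norm_pow] at h3
  have h4 : ‖q‖ * ‖q‖ ^ j ≤ ‖q‖ := by
    have h5 : ‖q‖ ^ j ≤ 1 := pow_le_one₀ (norm_nonneg q) hq1.le
    nlinarith [norm_nonneg q]
  linarith

/-- the coefficients of the q-binomial series -/
noncomputable def qC (q a : ℂ) (k : ℕ) : ℂ := qPoch a q k / qPoch q q k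

/-- uniform bound on the coefficients -/
noncomputable def qM (q a : ℂ) : ℝ :=
  Real.exp (‖a‖ * (1 - ‖q‖)⁻¹) *
    Real.exp (‖q‖ * ((1 - ‖q‖)⁻¹ * (1 - ‖q‖)⁻¹))

lemma qM_nonneg (q a : ℂ) : 0 ≤ qM q a := by
  unfold qM; positivity

lemma abs_qC_le {q : ℂ} (hq1 : ‖q‖ < 1) (a : ℂ) (k : ℕ) :
    ‖qC q a k‖ ≤ qM q a := by
  rw [qC, norm_div, qM]
  set E := ‖q‖ * ((1 - ‖q‖)⁻¹ * (1 - ‖q‖)⁻¹) with hE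
  have h1 : Real.exp (-E) ≤ ‖qPoch q q k‖ := abs_qPoch_ge hq1 hq1 k
  have h2 : ‖qPoch a q k‖ ≤ Real.exp (‖a‖ * (1 - ‖q‖)⁻¹) :=
    abs_qPoch_le hq1 a k
  have h3 : 0 < ‖qPoch q q k‖ := lt_of_lt_of_le (Real.exp_pos _) h1
  calc ‖qPoch a q k‖ / ‖qPoch q q k‖
      ≤ Real.exp (‖a‖ * (1 - ‖q‖)⁻¹) / Real.exp (-E) :=
        div_le_div₀ (Real.exp_pos _).le h2 (Real.exp_pos _) h1
    _ = Real.exp (‖a‖ * (1 - ‖q‖)⁻¹) * Real.exp E := by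
        rw [Real.exp_neg]; field_simp

lemma summable_norm_qC_mul_pow {q : ℂ} (hq1 : ‖q‖ < 1) (a : ℂ) {x : ℂ}
    (hx : ‖x‖ < 1) :
    Summable (fun k : ℕ => ‖qC q a k * x ^ k‖) := by
  have hg : Summable (fun k : ℕ => qM q a * ‖x‖ ^ k) :=
    (summable_geometric_of_lt_one (norm_nonneg x) hx).mul_left _
  have hle : ∀ k : ℕ, ‖qC q a k * x ^ k‖ ≤ qM q a * ‖x‖ ^ k := by
    intro k
    rw [norm_mul, norm_pow, ]
    exact mul_le_mul_of_nonneg_right (abs_qC_le hq1 a k) (by positivity)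
  exact Summable.of_nonneg_of_le (fun k => norm_nonneg _) hle hg

lemma summable_qC_mul_pow {q : ℂ} (hq1 : ‖q‖ < 1) (a : ℂ) {x : ℂ}
    (hx : ‖x‖ < 1) :
    Summable (fun k : ℕ => qC q a k * x ^ k) :=
  (summable_norm_qC_mul_pow hq1 a hx).of_norm

lemma one_sub_q_mul_pow_ne_zero {q : ℂ} (hq1 : ‖q‖ < 1) (k : ℕ) :
    (1 : ℂ) - q * q ^ k ≠ 0 := by
  intro h
  have h2 : q * q ^ k = 1 := by linear_combination -h
  have h3 : ‖q * q ^ k‖ = 1 := by rw [h2]; simp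
  rw [norm_mul, norm_pow] at h3
  have h5 : ‖q‖ ^ k ≤ 1 := pow_le_one₀ (norm_nonneg q) hq1.le
  nlinarith [norm_nonneg q]

lemma qC_zero (q a : ℂ) : qC q a 0 = 1 := by simp [qC, qPoch]

lemma qC_succ_mul {q : ℂ} (hq1 : ‖q‖ < 1) (a : ℂ) (k : ℕ) :
    qC q a (k + 1) * (1 - q * q ^ k) = qC q a k * (1 - a * q ^ k) := by
  have h1 : qPoch a q (k + 1) = qPoch a q k * (1 - a * q ^ k) := Finset.prod_range_succ _ _
  have h2 : qPoch q q (k + 1) = qPoch q q k * (1 - q * q ^ k) := Finset.prod_range_succ _ _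
  rw [qC, qC, h1, h2]
  have h3 : qPoch q q k ≠ 0 := qPoch_q_ne_zero hq1 k
  have h4 : (1 : ℂ) - q * q ^ k ≠ 0 := one_sub_q_mul_pow_ne_zero hq1 k
  rw [div_mul_eq_mul_div, div_mul_eq_mul_div, div_eq_div_iff (mul_ne_zero h3 h4) h3]
  ring

lemma funEq {q : ℂ} (hq1 : ‖q‖ < 1) (a : ℂ) {x : ℂ} (hx : ‖x‖ < 1) :
    (1 - x) * ∑' k : ℕ, qC q a k * x ^ k =
      (1 - a * x) * ∑' k : ℕ, qC q a k * (q * x) ^ k := by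
  have hqx : ‖q * x‖ < 1 := by
    rw [norm_mul]
    nlinarith [norm_nonneg q, norm_nonneg x]
  have h1 : Summable (fun k : ℕ => qC q a k * x ^ k) := summable_qC_mul_pow hq1 a hx
  have h2 : Summable (fun k : ℕ => qC q a k * (q * x) ^ k) := summable_qC_mul_pow hq1 a hqx
  set S1 := ∑' k : ℕ, qC q a k * x ^ k with hS1
  set S2 := ∑' k : ℕ, qC q a k * (q * x) ^ k with hS2
  -- the two shifted series
  set g : ℕ → ℂ := fun k => qC q a k * (1 - q ^ k) * x ^ k with hg
  set h : ℕ → ℂ := fun k => qC q a k * (1 - a * q ^ k) * x ^ (k + 1) with hh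
  have hgs : Summable g := by
    apply (h1.sub h2).congr
    intro k
    simp only [hg, mul_pow]
    ring
  have hhs : Summable h := by
    apply ((h1.mul_left x).sub (h2.mul_left (a * x))).congr
    intro k
    simp only [hh, mul_pow]
    ring
  have hA : S1 - S2 = ∑' k : ℕ, g k := by
    rw [hS1, hS2, ← Summable.tsum_sub h1 h2]
    apply tsum_congr
    intro k
    simp only [hg, mul_pow]
    ring
  have hB : x * S1 - (a * x) * S2 = ∑' k : ℕ, h k := by
    rw [hS1, hS2, ← tsum_mul_left, ← tsum_mul_left, ← Summable.tsum_sub (h1.mul_left x) (h2.mul_left (a * x))]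
    apply tsum_congr
    intro k
    simp only [hh, mul_pow]
    ring
  have hshift : ∑' k : ℕ, g k = ∑' k : ℕ, h k := by
    rw [Summable.tsum_eq_zero_add hgs]
    have hg0 : g 0 = 0 := by simp [hg]
    rw [hg0, zero_add]
    apply tsum_congr
    intro k
    simp only [hg, hh]
    have := qC_succ_mul hq1 a k
    have hpow : q ^ (k + 1) = q * q ^ k := by rw [pow_succ]; ring
    rw [hpow]
    linear_combination x ^ (k + 1) * this
  have : S1 - S2 = x * S1 - (a * x) * S2 := by rw [hA, hB, hshift]
  linear_combination this

lemma abs_pow_mul_lt {q : ℂ} (hq1 : ‖q‖ < 1) {x : ℂ} (hx : ‖x‖ < 1) (n : ℕ) :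
    ‖q ^ n * x‖ < 1 := by
  rw [norm_mul, norm_pow]
  have h5 : ‖q‖ ^ n ≤ 1 := pow_le_one₀ (norm_nonneg q) hq1.le
  nlinarith [norm_nonneg x, pow_nonneg (norm_nonneg q) n]

lemma iterEq {q : ℂ} (hq1 : ‖q‖ < 1) (a : ℂ) {x : ℂ} (hx : ‖x‖ < 1) (n : ℕ) :
    (∏ j ∈ Finset.range n, (1 - x * q ^ j)) * ∑' k : ℕ, qC q a k * x ^ k =
      (∏ j ∈ Finset.range n, (1 - (a * x) * q ^ j)) * ∑' k : ℕ, qC q a k * (q ^ n * x) ^ k := by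
  induction n with
  | zero => simp
  | succ n ih =>
    have habs : ‖q ^ n * x‖ < 1 := abs_pow_mul_lt hq1 hx n
    have hfe := funEq hq1 a habs
    have hrw : q * (q ^ n * x) = q ^ (n + 1) * x := by rw [pow_succ]; ring
    rw [hrw] at hfe
    rw [Finset.prod_range_succ, Finset.prod_range_succ]
    set P := ∏ j ∈ Finset.range n, (1 - x * q ^ j)
    set A := ∏ j ∈ Finset.range n, (1 - (a * x) * q ^ j)
    set S := ∑' k : ℕ, qC q a k * x ^ k
    set F1 := ∑' k : ℕ, qC q a k * (q ^ n * x) ^ k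
    set F2 := ∑' k : ℕ, qC q a k * (q ^ (n + 1) * x) ^ k
    linear_combination (1 - x * q ^ n) * ih + A * hfe

lemma F_sub_one_bound {q : ℂ} (hq1 : ‖q‖ < 1) (a : ℂ) {y : ℂ} {r : ℝ}
    (hyx : ‖y‖ ≤ r) (hr : r < 1) :
    ‖(∑' k : ℕ, qC q a k * y ^ k) - 1‖ ≤ qM q a * (1 - r)⁻¹ * ‖y‖ := by
  have hy : ‖y‖ < 1 := lt_of_le_of_lt hyx hr
  have hy0 : (0:ℝ) ≤ ‖y‖ := norm_nonneg y
  have hr0 : (0:ℝ) ≤ r := le_trans hy0 hyx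
  have hs := summable_qC_mul_pow hq1 a hy
  rw [Summable.tsum_eq_zero_add hs, qC_zero, pow_zero, mul_one, add_sub_cancel_left]
  have hsn : Summable (fun k : ℕ => ‖qC q a (k + 1) * y ^ (k + 1)‖) :=
    (summable_nat_add_iff 1).2 (summable_norm_qC_mul_pow hq1 a hy)
  have hgeo : Summable (fun k : ℕ => (qM q a * ‖y‖) * ‖y‖ ^ k) :=
    (summable_geometric_of_lt_one hy0 hy).mul_left _
  calc ‖∑' k : ℕ, qC q a (k + 1) * y ^ (k + 1)‖
      ≤ ∑' k : ℕ, ‖qC q a (k + 1) * y ^ (k + 1)‖ := norm_tsum_le_tsum_norm hsn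
    _ ≤ ∑' k : ℕ, (qM q a * ‖y‖) * ‖y‖ ^ k := by
        apply Summable.tsum_le_tsum _ hsn hgeo
        intro k
        rw [norm_mul, norm_pow, ]
        calc ‖qC q a (k + 1)‖ * ‖y‖ ^ (k + 1)
            ≤ qM q a * ‖y‖ ^ (k + 1) :=
              mul_le_mul_of_nonneg_right (abs_qC_le hq1 a _) (by positivity)
          _ = (qM q a * ‖y‖) * ‖y‖ ^ k := by rw [pow_succ]; ring
    _ = (qM q a * ‖y‖) * (1 - ‖y‖)⁻¹ := by
        rw [tsum_mul_left, tsum_geometric_of_lt_one hy0 hy]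
    _ ≤ qM q a * (1 - r)⁻¹ * ‖y‖ := by
        have h1 : (1 - ‖y‖)⁻¹ ≤ (1 - r)⁻¹ :=
          inv_anti₀ (by linarith) (by linarith)
        have h2 : 0 ≤ qM q a * ‖y‖ := mul_nonneg (qM_nonneg q a) hy0
        nlinarith [qM_nonneg q a]

lemma tendsto_F_one {q : ℂ} (hq1 : ‖q‖ < 1) (a : ℂ) {x : ℂ}
    (hx : ‖x‖ < 1) :
    Tendsto (fun n : ℕ => ∑' k : ℕ, qC q a k * (q ^ n * x) ^ k) atTop (𝓝 1) := by
  have hnorm : Tendsto (fun n : ℕ => ‖(∑' k : ℕ, qC q a k * (q ^ n * x) ^ k) - 1‖)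
      atTop (𝓝 0) := by
    apply squeeze_zero (fun n => norm_nonneg _)
      (g := fun n => (qM q a * (1 - ‖x‖)⁻¹ * ‖x‖) * ‖q‖ ^ n)
    · intro n
      have hb : ‖q ^ n * x‖ ≤ ‖x‖ := by
        rw [norm_mul, norm_pow]
        have h5 : ‖q‖ ^ n ≤ 1 := pow_le_one₀ (norm_nonneg q) hq1.le
        nlinarith [norm_nonneg x, pow_nonneg (norm_nonneg q) n]
      have hfb := F_sub_one_bound hq1 a hb hx
      calc ‖(∑' k : ℕ, qC q a k * (q ^ n * x) ^ k) - 1‖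
          ≤ qM q a * (1 - ‖x‖)⁻¹ * ‖q ^ n * x‖ := hfb
        _ = (qM q a * (1 - ‖x‖)⁻¹ * ‖x‖) * ‖q‖ ^ n := by
            rw [norm_mul, norm_pow]; ring
    · have := (tendsto_pow_atTop_nhds_zero_of_lt_one (norm_nonneg q) hq1).const_mul
        (qM q a * (1 - ‖x‖)⁻¹ * ‖x‖)
      simpa using this
  have h2 := tendsto_zero_iff_norm_tendsto_zero.2 hnorm
  exact tendsto_sub_nhds_zero_iff.1 h2

lemma hasProd_zero_of_exists {f : ℕ → ℂ} (hj : ∃ j, f j = 0) : HasProd f 0 := by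
  obtain ⟨j, hj⟩ := hj
  rw [HasProd]
  have hev : ∀ᶠ s : Finset ℕ in atTop, (∏ i ∈ s, f i) = 0 := by
    rw [eventually_atTop]
    exact ⟨{j}, fun s hs =>
      Finset.prod_eq_zero (Finset.singleton_subset_iff.1 hs) hj⟩
  exact tendsto_const_nhds.congr' (hev.mono fun s hs => hs.symm)

lemma summable_log_one_sub {q : ℂ} (hq1 : ‖q‖ < 1) (a : ℂ) :
    Summable (fun j : ℕ => Complex.log (1 - a * q ^ j)) := by
  have h0 : Tendsto (fun n : ℕ => ‖q‖ ^ n) atTop (𝓝 0) :=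
    tendsto_pow_atTop_nhds_zero_of_lt_one (norm_nonneg q) hq1
  have hev : ∀ᶠ n : ℕ in atTop, ‖q‖ ^ n < (1/2) / (‖a‖ + 1) :=
    h0.eventually (gt_mem_nhds (by positivity))
  obtain ⟨N, hN⟩ := hev.exists
  have hN2 : ‖a‖ * ‖q‖ ^ N ≤ 1/2 := by
    have ha1 : 0 < ‖a‖ + 1 := by positivity
    have h6 := (lt_div_iff₀ ha1).1 hN
    nlinarith [pow_nonneg (norm_nonneg q) N, norm_nonneg a]
  have htail : Summable (fun j : ℕ => Complex.log (1 - a * q ^ (j + N))) := by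
    apply Summable.of_norm_bounded
      (g := fun j : ℕ => (3/2 * (‖a‖ * ‖q‖ ^ N)) * ‖q‖ ^ j)
      ((summable_geometric_of_lt_one (norm_nonneg q) hq1).mul_left _)
    intro j
    have hz : ‖-(a * q ^ (j + N))‖ ≤ 1/2 := by
      rw [norm_neg, norm_mul, norm_pow, pow_add]
      calc ‖a‖ * (‖q‖ ^ j * ‖q‖ ^ N)
          = (‖a‖ * ‖q‖ ^ N) * ‖q‖ ^ j := by ring
        _ ≤ (1/2) * 1 := by
            apply mul_le_mul hN2 (pow_le_one₀ (norm_nonneg q) hq1.le)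
              (by positivity) (by norm_num)
        _ = 1/2 := by norm_num
    have := Complex.norm_log_one_add_half_le_self hz
    rw [show (1 : ℂ) + -(a * q ^ (j + N)) = 1 - a * q ^ (j + N) by ring] at this
    refine le_trans this ?_
    rw [norm_neg, norm_mul, norm_pow, pow_add]
    ring_nf
    nlinarith [norm_nonneg a, norm_nonneg q,
      pow_nonneg (norm_nonneg q) j, pow_nonneg (norm_nonneg q) N,
      mul_nonneg (norm_nonneg a) (pow_nonneg (norm_nonneg q) j)]
  exact (summable_nat_add_iff N).1 htail

lemma multipliable_one_sub {q : ℂ} (hq1 : ‖q‖ < 1) (a : ℂ) :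
    Multipliable (fun j : ℕ => 1 - a * q ^ j) := by
  by_cases hzero : ∃ j : ℕ, (1 : ℂ) - a * q ^ j = 0
  · exact ⟨0, hasProd_zero_of_exists hzero⟩
  · push_neg at hzero
    exact Complex.multipliable_of_summable_log (summable_log_one_sub hq1 a)

lemma qPochInf_ne_zero_s5 {q : ℂ} (hq1 : ‖q‖ < 1) {x : ℂ} (hx : ‖x‖ < 1) :
    qPochInf x q ≠ 0 := by
  have hzero : ∀ j : ℕ, (1 : ℂ) - x * q ^ j ≠ 0 := by
    intro j h
    have h2 : x * q ^ j = 1 := by linear_combination -h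
    have h3 : ‖x * q ^ j‖ = 1 := by rw [h2]; simp
    rw [norm_mul, norm_pow] at h3
    have h5 : ‖q‖ ^ j ≤ 1 := pow_le_one₀ (norm_nonneg q) hq1.le
    nlinarith [norm_nonneg x, norm_nonneg q,
      pow_nonneg (norm_nonneg q) j]
  have := Complex.cexp_tsum_eq_tprod (f := fun j => 1 - x * q ^ j)
    hzero (summable_log_one_sub hq1 x)
  have h2 := this
  rw [qPochInf, ← h2]
  exact Complex.exp_ne_zero _

lemma qBinomial {q : ℂ} (hq1 : ‖q‖ < 1) (a : ℂ) {x : ℂ} (hx : ‖x‖ < 1) :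
    ∑' k : ℕ, qC q a k * x ^ k = qPochInf (a * x) q / qPochInf x q := by
  have hP : Tendsto (fun n : ℕ => ∏ j ∈ Finset.range n, (1 - x * q ^ j)) atTop
      (𝓝 (qPochInf x q)) := (multipliable_one_sub hq1 x).hasProd.tendsto_prod_nat
  have hA : Tendsto (fun n : ℕ => ∏ j ∈ Finset.range n, (1 - (a * x) * q ^ j)) atTop
      (𝓝 (qPochInf (a * x) q)) := (multipliable_one_sub hq1 (a * x)).hasProd.tendsto_prod_nat
  have hF := tendsto_F_one hq1 a hx
  have hL : Tendsto (fun n : ℕ =>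
      (∏ j ∈ Finset.range n, (1 - x * q ^ j)) * ∑' k : ℕ, qC q a k * x ^ k) atTop
      (𝓝 (qPochInf x q * ∑' k : ℕ, qC q a k * x ^ k)) := hP.mul_const _
  have hR : Tendsto (fun n : ℕ =>
      (∏ j ∈ Finset.range n, (1 - (a * x) * q ^ j)) * ∑' k : ℕ, qC q a k * (q ^ n * x) ^ k) atTop
      (𝓝 (qPochInf (a * x) q * 1)) := hA.mul hF
  have heq : qPochInf x q * ∑' k : ℕ, qC q a k * x ^ k = qPochInf (a * x) q * 1 :=
    tendsto_nhds_unique (hL.congr (fun n => iterEq hq1 a hx n)) hR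
  rw [mul_one] at heq
  rw [eq_div_iff (qPochInf_ne_zero_s5 hq1 hx)]
  linear_combination heq

lemma qPoch_zero (q : ℂ) (m : ℕ) : qPoch 0 q m = 1 := by simp [qPoch]

lemma qPochInf_zero (q : ℂ) : qPochInf 0 q = 1 := by simp [qPochInf]

/-- Generating function of the q-Sylvester polynomials:
`∑_{n=0}^∞ φ_n(z;q) t^n = (wt;q)_∞/((t;q)_∞ (zt;q)_∞)`. -/
theorem qSylvester_genfun (q w z t : ℂ) (hq0 : 0 < ‖q‖)
    (hq1 : ‖q‖ < 1) (hz : z ≠ 0)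
    (ht : ‖t‖ < 1) (hzt : ‖z * t‖ < 1) :
    ∑' n : ℕ, qSylvester q w z n * t ^ n =
      qPochInf (w * t) q / (qPochInf t q * qPochInf (z * t) q) := by
  have hfn : Summable (fun k : ℕ => ‖qC q w k * t ^ k‖) :=
    summable_norm_qC_mul_pow hq1 w ht
  have hgn : Summable (fun m : ℕ => ‖qC q 0 m * (z * t) ^ m‖) :=
    summable_norm_qC_mul_pow hq1 0 hzt
  have hterm : ∀ n : ℕ,
      qSylvester q w z n * t ^ n =
        ∑ k ∈ Finset.range (n + 1), (qC q w k * t ^ k) * (qC q 0 (n - k) * (z * t) ^ (n - k)) := by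
    intro n
    rw [qSylvester, Finset.sum_mul]
    apply Finset.sum_congr rfl
    intro k hk
    have hkn : k ≤ n := Nat.lt_succ_iff.1 (Finset.mem_range.1 hk)
    have hpow : t ^ k * t ^ (n - k) = t ^ n := by
      rw [← pow_add, Nat.add_sub_cancel' hkn]
    rw [qC, qC, qPoch_zero, mul_pow, ← hpow]
    ring
  calc ∑' n : ℕ, qSylvester q w z n * t ^ n
      = ∑' n : ℕ, ∑ k ∈ Finset.range (n + 1),
          (qC q w k * t ^ k) * (qC q 0 (n - k) * (z * t) ^ (n - k)) := tsum_congr hterm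
    _ = (∑' k : ℕ, qC q w k * t ^ k) * ∑' m : ℕ, qC q 0 m * (z * t) ^ m :=
        (tsum_mul_tsum_eq_tsum_sum_range_of_summable_norm hfn hgn).symm
    _ = (qPochInf (w * t) q / qPochInf t q) * (qPochInf (0 * (z * t)) q / qPochInf (z * t) q) := by
        rw [qBinomial hq1 w ht, qBinomial hq1 0 hzt]
    _ = qPochInf (w * t) q / (qPochInf t q * qPochInf (z * t) q) := by
        rw [zero_mul, qPochInf_zero, div_mul_div_comm, mul_one]
end

section
/- For natural number m and complex t with |t| < 1, the Bateman polynomials B_m(z) = ₃F₂(−m, m+1, (z+1)/2; 1, 1; 1) satisfy ∑_{n=0}^∞ B_m(−2n−1) t^n = (1/(1−t)) · P_m((1+t)/(1−t)), where P_m is the m-th Legendre polynomial. -/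
/-- The rising factorial (Pochhammer symbol) `(a)_k = a(a+1)⋯(a+k-1)`. -/
noncomputable def risingFactorial (a : ℂ) (k : ℕ) : ℂ :=
  ∏ i ∈ Finset.range k, (a + i)

lemma rf_neg (n k : ℕ) :
    risingFactorial (-(n : ℂ)) k = (-1) ^ k * (k.factorial : ℂ) * (n.choose k : ℂ) := by
  induction k with
  | zero => simp [risingFactorial]
  | succ k ih =>
    rw [risingFactorial, Finset.prod_range_succ, ← risingFactorial, ih]
    have key : ((k+1).factorial : ℂ) * (n.choose (k+1) : ℂ)
        = (k.factorial : ℂ) * (n.choose k : ℂ) * ((n : ℂ) - k) := by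
      rcases lt_or_ge k n with h | h
      · have hc := congrArg (Nat.cast : ℕ → ℂ) (Nat.choose_succ_right_eq n k)
        push_cast [Nat.cast_sub h.le] at hc
        rw [Nat.factorial_succ]
        push_cast
        linear_combination (k.factorial : ℂ) * hc
      · rcases eq_or_lt_of_le h with h | h
        · subst h
          simp [Nat.choose_eq_zero_of_lt (Nat.lt_succ_self n)]
        · simp [Nat.choose_eq_zero_of_lt h,
            Nat.choose_eq_zero_of_lt (h.trans (Nat.lt_succ_self k))]
    linear_combination ((-1:ℂ))^k * key

lemma rf_pos (m k : ℕ) :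
    risingFactorial ((m : ℂ) + 1) k = (k.factorial : ℂ) * ((m + k).choose k : ℂ) := by
  induction k with
  | zero => simp [risingFactorial]
  | succ k ih =>
    rw [risingFactorial, Finset.prod_range_succ, ← risingFactorial, ih]
    have key := congrArg (Nat.cast : ℕ → ℂ) (Nat.add_one_mul_choose_eq (m + k) k)
    push_cast at key
    have h2 : m + (k+1) = m + k + 1 := rfl
    rw [h2, Nat.factorial_succ]
    push_cast
    linear_combination (k.factorial : ℂ) * key

lemma hasSum_choose (k : ℕ) {t : ℂ} (ht : ‖t‖ < 1) :
    HasSum (fun n : ℕ => (n.choose k : ℂ) * t ^ n) (t ^ k / (1 - t) ^ (k + 1)) := by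
  have ht' : ‖t‖ < 1 := ht
  have h := (hasSum_choose_mul_geometric_of_norm_lt_one k ht').mul_left (t ^ k)
  have e1 : (fun i : ℕ => t ^ k * ((((i+k).choose k) : ℂ) * t ^ i))
      = fun n : ℕ => (((n+k).choose k) : ℂ) * t ^ (n+k) := by
    funext n; rw [pow_add]; ring
  rw [e1, mul_one_div] at h
  apply (hasSum_nat_add_iff' (f := fun n : ℕ => (n.choose k : ℂ) * t ^ n) k).mp
  have hz : ∑ i ∈ Finset.range k, (i.choose k : ℂ) * t ^ i = 0 := by
    apply Finset.sum_eq_zero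
    intro i hi
    rw [Finset.mem_range] at hi
    simp [Nat.choose_eq_zero_of_lt hi]
  rw [hz, sub_zero]
  exact h

lemma nat_ident (m j : ℕ) (hj : j ≤ m) :
    ∑ k ∈ Finset.range (j + 1), m.choose k ^ 2 * (m - k).choose (j - k)
      = m.choose j * (m + j).choose j := by
  have step : ∀ k ∈ Finset.range (j + 1),
      m.choose k ^ 2 * (m - k).choose (j - k) = m.choose j * (m.choose k * j.choose (j - k)) := by
    intro k hk
    rw [Finset.mem_range] at hk
    have hkj : k ≤ j := Nat.lt_succ_iff.mp hk
    have h1 := Nat.choose_mul (n := m) (k := j) (s := k) hkj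
    rw [Nat.choose_symm hkj]
    calc m.choose k ^ 2 * (m - k).choose (j - k)
        = m.choose k * (m.choose k * (m - k).choose (j - k)) := by ring
      _ = m.choose k * (m.choose j * j.choose k) := by rw [← h1]
      _ = m.choose j * (m.choose k * j.choose k) := by ring
  rw [Finset.sum_congr rfl step, ← Finset.mul_sum]
  congr 1
  have v := Nat.add_choose_eq m j j
  rw [Finset.Nat.sum_antidiagonal_eq_sum_range_succ_mk] at v
  rw [v]

lemma star_ident (m : ℕ) (u : ℂ) :
    ∑ k ∈ Finset.range (m + 1), (m.choose k : ℂ) ^ 2 * u ^ k * (1 + u) ^ (m - k)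
      = ∑ j ∈ Finset.range (m + 1), (m.choose j : ℂ) * ((m + j).choose j : ℂ) * u ^ j := by
  have expand : ∀ k ∈ Finset.range (m + 1),
      (m.choose k : ℂ) ^ 2 * u ^ k * (1 + u) ^ (m - k)
        = ∑ i ∈ Finset.range (m - k + 1),
            (m.choose k : ℂ) ^ 2 * ((m - k).choose i : ℂ) * u ^ (k + i) := by
    intro k hk
    rw [add_comm (1 : ℂ) u, add_pow]
    rw [Finset.mul_sum]
    apply Finset.sum_congr rfl
    intro i hi
    rw [pow_add]
    ring
  rw [Finset.sum_congr rfl expand, Finset.sum_sigma']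
  have collect : ∀ j ∈ Finset.range (m + 1),
      (m.choose j : ℂ) * ((m + j).choose j : ℂ) * u ^ j
        = ∑ k ∈ Finset.range (j + 1),
            (m.choose k : ℂ) ^ 2 * ((m - k).choose (j - k) : ℂ) * u ^ j := by
    intro j hj
    rw [Finset.mem_range, Nat.lt_succ_iff] at hj
    rw [← Finset.sum_mul]
    congr 1
    exact_mod_cast (nat_ident m j hj).symm
  rw [Finset.sum_congr rfl collect, Finset.sum_sigma']
  apply Finset.sum_nbij' (fun p => ⟨p.1 + p.2, p.1⟩) (fun p => ⟨p.2, p.1 - p.2⟩)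
  · rintro ⟨k, i⟩ h
    simp only [Finset.mem_sigma, Finset.mem_range, Nat.lt_succ_iff] at h ⊢
    omega
  · rintro ⟨j, k⟩ h
    simp only [Finset.mem_sigma, Finset.mem_range, Nat.lt_succ_iff] at h ⊢
    omega
  · rintro ⟨k, i⟩ h
    have hh : k + i - k = i := by omega
    simp [hh]
  · rintro ⟨j, k⟩ h
    simp only [Finset.mem_sigma, Finset.mem_range, Nat.lt_succ_iff] at h
    have hh : k + (j - k) = j := by omega
    simp [hh]
  · rintro ⟨k, i⟩ h
    have hh : k + i - k = i := by omega
    simp [hh]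

/-- The Bateman polynomial `B_m` evaluated at `z = -2n-1`:
`B_m(−2n−1) = ∑_{k=0}^m (−m)_k (m+1)_k (−n)_k / (k!)³`. -/
noncomputable def batemanEval (m n : ℕ) : ℂ :=
  ∑ k ∈ Finset.range (m + 1),
    risingFactorial (-(m : ℂ)) k * risingFactorial ((m : ℂ) + 1) k *
      risingFactorial (-(n : ℂ)) k / ((k.factorial : ℂ)) ^ 3

/-- The Legendre polynomial
`P_m(x) = 2^{-m} ∑_{k=0}^m (m choose k)² (x−1)^{m−k} (x+1)^k`. -/
noncomputable def legendreP (m : ℕ) (x : ℂ) : ℂ :=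
  (1 / 2 ^ m) * ∑ k ∈ Finset.range (m + 1),
    ((m.choose k : ℂ)) ^ 2 * (x - 1) ^ (m - k) * (x + 1) ^ k

lemma star2 (m : ℕ) {t : ℂ} (hs : (1 : ℂ) - t ≠ 0) :
    ∑ k ∈ Finset.range (m + 1),
        (m.choose k : ℂ) * ((m + k).choose k : ℂ) * t ^ k * (1 - t) ^ (m - k)
      = ∑ k ∈ Finset.range (m + 1), (m.choose k : ℂ) ^ 2 * t ^ k := by
  have key : ∀ n : ℕ, (t / (1 - t)) ^ n * (1 - t) ^ n = t ^ n := by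
    intro n
    rw [div_pow, div_mul_cancel₀]
    exact pow_ne_zero _ hs
  have key2 : ((1 : ℂ) + t / (1 - t)) * (1 - t) = 1 := by
    field_simp
    ring
  have h' := congrArg (fun x => (1 - t) ^ m * x) (star_ident m (t / (1 - t)))
  simp only [Finset.mul_sum] at h'
  have L : ∀ k ∈ Finset.range (m + 1),
      (1 - t) ^ m * ((m.choose k : ℂ) ^ 2 * (t / (1 - t)) ^ k * (1 + t / (1 - t)) ^ (m - k))
        = (m.choose k : ℂ) ^ 2 * t ^ k := by
    intro k hk
    rw [Finset.mem_range, Nat.lt_succ_iff] at hk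
    have e0 : ((1 : ℂ) - t) ^ m = (1 - t) ^ k * (1 - t) ^ (m - k) := by
      rw [← pow_add]; congr 1; omega
    have e2 : ((1 : ℂ) + t / (1 - t)) ^ (m - k) * (1 - t) ^ (m - k) = 1 := by
      rw [← mul_pow, key2, one_pow]
    calc (1 - t) ^ m * ((m.choose k : ℂ) ^ 2 * (t / (1 - t)) ^ k * (1 + t / (1 - t)) ^ (m - k))
        = (m.choose k : ℂ) ^ 2 * ((t / (1 - t)) ^ k * (1 - t) ^ k)
            * ((1 + t / (1 - t)) ^ (m - k) * (1 - t) ^ (m - k)) := by rw [e0]; ring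
      _ = (m.choose k : ℂ) ^ 2 * t ^ k := by rw [key k, e2, mul_one]
  have R : ∀ j ∈ Finset.range (m + 1),
      (1 - t) ^ m * ((m.choose j : ℂ) * ((m + j).choose j : ℂ) * (t / (1 - t)) ^ j)
        = (m.choose j : ℂ) * ((m + j).choose j : ℂ) * t ^ j * (1 - t) ^ (m - j) := by
    intro j hj
    rw [Finset.mem_range, Nat.lt_succ_iff] at hj
    have e0 : ((1 : ℂ) - t) ^ m = (1 - t) ^ j * (1 - t) ^ (m - j) := by
      rw [← pow_add]; congr 1; omega
    calc (1 - t) ^ m * ((m.choose j : ℂ) * ((m + j).choose j : ℂ) * (t / (1 - t)) ^ j)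
        = (m.choose j : ℂ) * ((m + j).choose j : ℂ)
            * ((t / (1 - t)) ^ j * (1 - t) ^ j) * (1 - t) ^ (m - j) := by rw [e0]; ring
      _ = (m.choose j : ℂ) * ((m + j).choose j : ℂ) * t ^ j * (1 - t) ^ (m - j) := by
          rw [key j]
  rw [Finset.sum_congr rfl L, Finset.sum_congr rfl R] at h'
  exact h'.symm

/-- `∑_{n=0}^∞ B_m(−2n−1) t^n = (1/(1−t)) P_m((1+t)/(1−t))`. -/
theorem bateman_eval_genfun_legendre (m : ℕ) (t : ℂ) (ht : ‖t‖ < 1) :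
    ∑' n : ℕ, batemanEval m n * t ^ n =
      (1 / (1 - t)) * legendreP m ((1 + t) / (1 - t)) := by
  have hs : (1 : ℂ) - t ≠ 0 := by
    rw [sub_ne_zero]
    intro h
    rw [← h] at ht
    simp at ht
  -- coefficient identity
  have perterm : ∀ k n : ℕ,
      risingFactorial (-(m : ℂ)) k * risingFactorial ((m : ℂ) + 1) k *
          risingFactorial (-(n : ℂ)) k / ((k.factorial : ℂ)) ^ 3
        = (m.choose k : ℂ) * ((m + k).choose k : ℂ) * (n.choose k : ℂ) := by
    intro k n
    have hfact : (k.factorial : ℂ) ≠ 0 := Nat.cast_ne_zero.mpr (Nat.factorial_ne_zero k)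
    have hneg : ((-1 : ℂ)) ^ k * ((-1 : ℂ)) ^ k = 1 := by
      rw [← mul_pow]; norm_num
    rw [rf_neg, rf_pos, rf_neg, div_eq_iff (pow_ne_zero 3 hfact)]
    linear_combination ((k.factorial : ℂ) ^ 3 * (m.choose k : ℂ) * ((m + k).choose k : ℂ)
      * (n.choose k : ℂ)) * hneg
  -- the tsum
  have hsum : HasSum (fun n : ℕ => batemanEval m n * t ^ n)
      (∑ k ∈ Finset.range (m + 1),
        (m.choose k : ℂ) * ((m + k).choose k : ℂ) * (t ^ k / (1 - t) ^ (k + 1))) := by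
    have H := hasSum_sum (s := Finset.range (m + 1))
      (f := fun (k : ℕ) (n : ℕ) =>
        (m.choose k : ℂ) * ((m + k).choose k : ℂ) * ((n.choose k : ℂ) * t ^ n))
      (a := fun k => (m.choose k : ℂ) * ((m + k).choose k : ℂ) * (t ^ k / (1 - t) ^ (k + 1)))
      (fun k _ => (hasSum_choose k ht).mul_left _)
    convert H using 1
    funext n
    unfold batemanEval
    rw [Finset.sum_mul]
    apply Finset.sum_congr rfl
    intro k _
    rw [perterm k n]
    ring
  rw [hsum.tsum_eq]
  -- right-hand side
  have hx1 : (1 + t) / (1 - t) - 1 = 2 * t / (1 - t) := by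
    field_simp; ring
  have hx2 : (1 + t) / (1 - t) + 1 = 2 / (1 - t) := by
    field_simp; ring
  unfold legendreP
  rw [hx1, hx2]
  have RHSterm : ∀ k ∈ Finset.range (m + 1),
      (m.choose k : ℂ) ^ 2 * (2 * t / (1 - t)) ^ (m - k) * (2 / (1 - t)) ^ k
        = (2 : ℂ) ^ m / (1 - t) ^ m * ((m.choose k : ℂ) ^ 2 * t ^ (m - k)) := by
    intro k hk
    rw [Finset.mem_range, Nat.lt_succ_iff] at hk
    rw [div_pow, div_pow, mul_pow]
    rw [show (2 : ℂ) ^ m = 2 ^ (m - k) * 2 ^ k by rw [← pow_add]; congr 1; omega,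
        show ((1 : ℂ) - t) ^ m = (1 - t) ^ (m - k) * (1 - t) ^ k by
          rw [← pow_add]; congr 1; omega]
    field_simp
  rw [Finset.sum_congr rfl RHSterm, ← Finset.mul_sum]
  have reflect : ∑ k ∈ Finset.range (m + 1), (m.choose k : ℂ) ^ 2 * t ^ (m - k)
      = ∑ k ∈ Finset.range (m + 1), (m.choose k : ℂ) ^ 2 * t ^ k := by
    rw [← Finset.sum_range_reflect]
    apply Finset.sum_congr rfl
    intro k hk
    rw [Finset.mem_range, Nat.lt_succ_iff] at hk
    rw [show m + 1 - 1 - k = m - k by omega, Nat.choose_symm hk,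
        show m - (m - k) = k by omega]
  rw [reflect, ← star2 m hs, Finset.mul_sum, Finset.mul_sum, Finset.mul_sum]
  apply Finset.sum_congr rfl
  intro k hk
  rw [Finset.mem_range, Nat.lt_succ_iff] at hk
  have e0 : ((1 : ℂ) - t) ^ (m + 1) = (1 - t) ^ (k + 1) * (1 - t) ^ (m - k) := by
    rw [← pow_add]; congr 1; omega
  have h2 : (2 : ℂ) ^ m ≠ 0 := pow_ne_zero _ two_ne_zero
  field_simp
  rw [mul_assoc _ (1 - t : ℂ), show ((1:ℂ) - t) * (1 - t) ^ m = (1 - t) ^ (k + 1) * (1 - t) ^ (m - k) from by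
    rw [← pow_succ', ← pow_add]; congr 1; omega]
  ring
end

section
/- For natural numbers m, j and complex t with |t| < 1, ∑_{n=0}^∞ B_m^j(−2n−1−j) t^n = (1/(1−t)) · ₂F₁(−m, m+1; j+1; −t/(1−t)), where B_m^j(z) = ₃F₂(−m, m+1, (z+j+1)/2; 1, j+1; 1) is the Pasternack polynomial, so B_m^j(−2n−1−j) = ∑_{k=0}^m ((−m)_k (m+1)_k (−n)_k / (k! k! (j+1)_k)). -/
/-- The Pasternack polynomial `B_m^j` evaluated at `z = −2n−1−j`:
`B_m^j(−2n−1−j) = ∑_{k=0}^m (−m)_k (m+1)_k (−n)_k / (k! k! (j+1)_k)`. -/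
noncomputable def pasternackEval (m j n : ℕ) : ℂ :=
  ∑ k ∈ Finset.range (m + 1),
    risingFactorial (-(m : ℂ)) k * risingFactorial ((m : ℂ) + 1) k *
      risingFactorial (-(n : ℂ)) k /
      ((k.factorial : ℂ) * (k.factorial : ℂ) * risingFactorial ((j : ℂ) + 1) k)

lemma risingFactorial_neg_nat (n k : ℕ) :
    risingFactorial (-(n : ℂ)) k = (-1) ^ k * (n.descFactorial k : ℂ) := by
  induction k with
  | zero => simp [risingFactorial]
  | succ k ih =>
      rw [risingFactorial, Finset.prod_range_succ, ← risingFactorial, ih,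
        Nat.descFactorial_succ]
      rcases le_or_gt k n with h | h
      · have : ((n - k : ℕ) : ℂ) = (n : ℂ) - k := by
          push_cast [Nat.cast_sub h]; ring
        push_cast
        rw [this]
        ring
      · have h1 : n.descFactorial k = 0 := Nat.descFactorial_eq_zero_iff_lt.2 h
        simp [h1]

lemma risingFactorial_nat_ne_zero (j k : ℕ) :
    risingFactorial ((j : ℂ) + 1) k ≠ 0 := by
  have : risingFactorial ((j : ℂ) + 1) k =
      ((∏ i ∈ Finset.range k, (j + 1 + i) : ℕ) : ℂ) := by
    rw [risingFactorial]
    push_cast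
    rfl
  rw [this]
  simp only [ne_eq, Nat.cast_eq_zero]
  positivity

/-- `∑_{n=0}^∞ B_m^j(−2n−1−j) t^n = (1/(1−t)) ₂F₁(−m, m+1; j+1; −t/(1−t))`,
the ₂F₁ being a terminating hypergeometric sum. -/
theorem pasternack_eval_genfun (m j : ℕ) (t : ℂ) (ht : ‖t‖ < 1) :
    ∑' n : ℕ, pasternackEval m j n * t ^ n =
      (1 / (1 - t)) *
        ∑ k ∈ Finset.range (m + 1),
          (risingFactorial (-(m : ℂ)) k * risingFactorial ((m : ℂ) + 1) k /
            (risingFactorial ((j : ℂ) + 1) k * (k.factorial : ℂ))) *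
            (-t / (1 - t)) ^ k := by
  have htn : ‖t‖ < 1 := ht
  have h1t : (1 : ℂ) - t ≠ 0 := by
    intro h
    have : t = 1 := by linear_combination -h
    simp [this] at ht
  -- key generating function for binomial coefficients
  have key : ∀ k : ℕ, HasSum (fun n : ℕ => (n.choose k : ℂ) * t ^ n)
      (t ^ k / (1 - t) ^ (k + 1)) := by
    intro k
    have base := (hasSum_choose_mul_geometric_of_norm_lt_one k htn).mul_right (t ^ k)
    have base' : HasSum (fun n : ℕ => ((n + k).choose k : ℂ) * t ^ (n + k))
        (1 / (1 - t) ^ (k + 1) * t ^ k) := by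
      convert base using 2 with n
      · rfl
      rw [pow_add]; ring
    have := (hasSum_nat_add_iff (f := fun n : ℕ => (n.choose k : ℂ) * t ^ n) k).1 base'
    have hz : ∑ i ∈ Finset.range k, ((i.choose k : ℂ) * t ^ i) = 0 := by
      apply Finset.sum_eq_zero
      intro i hi
      rw [Nat.choose_eq_zero_of_lt (Finset.mem_range.1 hi)]
      simp
    rw [hz, add_zero] at this
    convert this using 1
    · rfl
    ring
  set C : ℕ → ℂ := fun k =>
    risingFactorial (-(m : ℂ)) k * risingFactorial ((m : ℂ) + 1) k * (-1) ^ k *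
      (k.factorial : ℂ) / ((k.factorial : ℂ) * (k.factorial : ℂ) *
        risingFactorial ((j : ℂ) + 1) k) with hC
  have hterm : ∀ n : ℕ, pasternackEval m j n * t ^ n =
      ∑ k ∈ Finset.range (m + 1), C k * ((n.choose k : ℂ) * t ^ n) := by
    intro n
    rw [pasternackEval, Finset.sum_mul]
    apply Finset.sum_congr rfl
    intro k _
    rw [risingFactorial_neg_nat n k, Nat.descFactorial_eq_factorial_mul_choose n k, hC]
    push_cast
    ring
  have hsum : ∀ k ∈ Finset.range (m + 1),
      Summable (fun n : ℕ => C k * ((n.choose k : ℂ) * t ^ n)) := by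
    intro k _
    exact ((key k).summable).mul_left _
  calc ∑' n : ℕ, pasternackEval m j n * t ^ n
      = ∑' n : ℕ, ∑ k ∈ Finset.range (m + 1), C k * ((n.choose k : ℂ) * t ^ n) :=
        tsum_congr hterm
    _ = ∑ k ∈ Finset.range (m + 1), ∑' n : ℕ, C k * ((n.choose k : ℂ) * t ^ n) :=
        Summable.tsum_finsetSum hsum
    _ = ∑ k ∈ Finset.range (m + 1), C k * (t ^ k / (1 - t) ^ (k + 1)) := by
        apply Finset.sum_congr rfl
        intro k _
        exact ((key k).mul_left (C k)).tsum_eq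
    _ = (1 / (1 - t)) *
        ∑ k ∈ Finset.range (m + 1),
          (risingFactorial (-(m : ℂ)) k * risingFactorial ((m : ℂ) + 1) k /
            (risingFactorial ((j : ℂ) + 1) k * (k.factorial : ℂ))) *
            (-t / (1 - t)) ^ k := by
        rw [Finset.mul_sum]
        apply Finset.sum_congr rfl
        intro k _
        rw [hC]
        have hf : (k.factorial : ℂ) ≠ 0 := Nat.cast_ne_zero.2 k.factorial_ne_zero
        have hr := risingFactorial_nat_ne_zero j k
        have h1tp : (1 - t) ^ k ≠ 0 := pow_ne_zero _ h1t
        rw [neg_div, neg_pow, div_pow, pow_succ]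
        field_simp
end

section
/- For natural numbers m, j, complex λ, and complex t with |t| < 1/2, ∑_{n=0}^∞ B_m^j(−2n−1−j) ((λ)_n/n!) t^n = (1−t)^{−λ} · ₃F₂(−m, m+1, λ; 1, j+1; −t/(1−t)), where B_m^j(−2n−1−j) = ∑_{k=0}^m ((−m)_k (m+1)_k (−n)_k / (k! k! (j+1)_k)) and (a)_k is the rising factorial. -/
open Finset

lemma rf_succ (a : ℂ) (n : ℕ) : risingFactorial a (n+1) = risingFactorial a n * (a + n) :=
  Finset.prod_range_succ _ _

lemma rf_add (a : ℂ) (k r : ℕ) :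
    risingFactorial a (k + r) = risingFactorial a k * risingFactorial (a + k) r := by
  induction r with
  | zero => simp [risingFactorial]
  | succ r ih =>
      rw [show k + (r+1) = (k+r)+1 from rfl, rf_succ, ih, rf_succ]
      push_cast; ring

lemma rf_neg_nat_zero {i k : ℕ} (h : i < k) : risingFactorial (-(i:ℂ)) k = 0 :=
  Finset.prod_eq_zero (Finset.mem_range.2 h) (by simp)

lemma rf_neg_fact (n : ℕ) : ∀ k, k ≤ n →
    risingFactorial (-(n:ℂ)) k * ((n-k).factorial : ℂ) = (-1)^k * (n.factorial : ℂ) := by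
  intro k
  induction k with
  | zero => intro _; simp [risingFactorial]
  | succ k ih =>
      intro hk1
      have hk : k ≤ n := Nat.le_of_succ_le hk1
      have ihk := ih hk
      have hfac : ((n-k).factorial : ℂ) = ((n - k : ℕ) : ℂ) * ((n-(k+1)).factorial : ℂ) := by
        have h1 : n - k = (n - (k+1)) + 1 := by omega
        rw [h1, Nat.factorial_succ]
        push_cast; ring
      have hneg : (-(n:ℂ) + k) = -((n - k : ℕ) : ℂ) := by
        push_cast [Nat.cast_sub hk]; ring
      rw [rf_succ, hneg]
      calc risingFactorial (-(n:ℂ)) k * -((n - k : ℕ) : ℂ) * ((n-(k+1)).factorial : ℂ)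
          = -(risingFactorial (-(n:ℂ)) k * (((n - k : ℕ) : ℂ) * ((n-(k+1)).factorial : ℂ))) := by ring
        _ = -(risingFactorial (-(n:ℂ)) k * ((n-k).factorial : ℂ)) := by rw [← hfac]
        _ = (-1)^(k+1) * (n.factorial : ℂ) := by rw [ihk]; ring

lemma rf_fact_div (r k : ℕ) :
    risingFactorial (-((r+k:ℕ)):ℂ) k = (-1)^k * ((r+k).factorial : ℂ) / (r.factorial : ℂ) := by
  have h := rf_neg_fact (r+k) k (Nat.le_add_left _ _)
  rw [Nat.add_sub_cancel] at h
  have hr : (r.factorial : ℂ) ≠ 0 := Nat.cast_ne_zero.2 r.factorial_ne_zero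
  rw [eq_div_iff hr]
  exact h

noncomputable def bb (c : ℝ) (n : ℕ) : ℝ := (∏ i ∈ Finset.range n, (c + i)) / n.factorial

lemma bb_nonneg {c : ℝ} (hc : 0 ≤ c) (n : ℕ) : 0 ≤ bb c n := by
  apply div_nonneg
  · exact Finset.prod_nonneg fun i _ => by positivity
  · positivity

lemma bb_le {c : ℝ} (hc : 1 ≤ c) (n : ℕ) : bb c n ≤ ((n:ℝ)+1) ^ (⌈c⌉₊) := by
  induction n with
  | zero => simp [bb]
  | succ n ih =>
      have h0 : (0:ℝ) ≤ c := le_trans zero_le_one hc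
      have hstep : bb c (n+1) = bb c n * ((c + n) / ((n:ℝ)+1)) := by
        unfold bb
        rw [Finset.prod_range_succ, Nat.factorial_succ]
        push_cast
        field_simp
      have hM : c ≤ (⌈c⌉₊ : ℝ) := Nat.le_ceil c
      have hb : (1:ℝ) + (⌈c⌉₊:ℝ) * (1/((n:ℝ)+1)) ≤ (1 + 1/((n:ℝ)+1)) ^ (⌈c⌉₊) := by
        have hx : (-2:ℝ) ≤ 1/((n:ℝ)+1) := le_trans (by norm_num) (by positivity : (0:ℝ) ≤ 1/((n:ℝ)+1))
        have := one_add_mul_le_pow (a := 1/((n:ℝ)+1)) hx ⌈c⌉₊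
        linarith [this]
      have hratio : (c + n) / ((n:ℝ)+1) ≤ (((n:ℝ)+2) / ((n:ℝ)+1)) ^ (⌈c⌉₊) := by
        have h1 : (c + n) / ((n:ℝ)+1) ≤ 1 + (⌈c⌉₊:ℝ) * (1/((n:ℝ)+1)) := by
          rw [div_le_iff₀ (by positivity)]
          have : (1 + (⌈c⌉₊:ℝ) * (1/((n:ℝ)+1))) * ((n:ℝ)+1) = (n:ℝ) + 1 + (⌈c⌉₊:ℝ) := by
            field_simp
          rw [this]
          linarith
        have h2 : (1 + 1/((n:ℝ)+1)) = (((n:ℝ)+2) / ((n:ℝ)+1)) := by field_simp; ring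
        rw [← h2]
        exact le_trans h1 hb
      calc bb c (n+1) = bb c n * ((c + n) / ((n:ℝ)+1)) := hstep
        _ ≤ (((n:ℝ)+1) ^ (⌈c⌉₊)) * ((((n:ℝ)+2) / ((n:ℝ)+1)) ^ (⌈c⌉₊)) := by
            apply mul_le_mul ih hratio (by positivity) (by positivity)
        _ = ((n:ℝ)+2) ^ (⌈c⌉₊) := by
            rw [← mul_pow]
            congr 1
            field_simp
        _ = ((↑(n+1):ℝ)+1) ^ (⌈c⌉₊) := by push_cast; ring_nf

lemma aux_pow_geom (M : ℕ) {r : ℝ} (h0 : 0 < r) (h1 : r < 1) :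
    Summable (fun n : ℕ => ((n:ℝ)+1) ^ M * r ^ n) := by
  have h : Summable (fun n : ℕ => ((n:ℝ)) ^ M * r ^ n) :=
    summable_pow_mul_geometric_of_norm_lt_one M (by rwa [Real.norm_eq_abs, abs_of_pos h0])
  have h2 : Summable (fun n : ℕ => ((↑(n+1):ℝ)) ^ M * r ^ (n+1)) := (summable_nat_add_iff 1).2 h
  have h3 := h2.mul_left r⁻¹
  apply h3.congr
  intro n
  push_cast
  field_simp
  ring

lemma norm_coef_le (lam : ℂ) (n : ℕ) :
    ‖risingFactorial lam n / (n.factorial : ℂ)‖ ≤ ((n:ℝ)+1) ^ (⌈‖lam‖+1⌉₊) := by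
  refine le_trans ?_ (bb_le (by linarith [norm_nonneg lam]) n)
  rw [bb, norm_div]
  have h1 : ‖risingFactorial lam n‖ ≤ ∏ i ∈ Finset.range n, (‖lam‖ + 1 + i) := by
    rw [risingFactorial, norm_prod]
    apply Finset.prod_le_prod (fun i _ => norm_nonneg _)
    intro i _
    calc ‖lam + (i:ℂ)‖ ≤ ‖lam‖ + ‖(i:ℂ)‖ := norm_add_le _ _
      _ ≤ ‖lam‖ + 1 + i := by
          rw [Complex.norm_natCast]; linarith
  have h2 : ‖((n.factorial : ℂ))‖ = (n.factorial : ℝ) := Complex.norm_natCast _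
  rw [h2]
  have h3 : (0:ℝ) < (n.factorial : ℝ) := by positivity
  gcongr

lemma hasSum_binomial (lam t : ℂ) (ht : ‖t‖ < 1) :
    HasSum (fun n : ℕ => risingFactorial lam n / (n.factorial : ℂ) * t ^ n) ((1 - t) ^ (-lam)) := by
  set M := ⌈‖lam‖+1⌉₊ with hM
  set a : ℕ → ℂ := fun n => risingFactorial lam n / (n.factorial : ℂ) with ha
  set f : ℂ → ℂ := fun z => ∑' n, a n * z ^ n with hf
  have hanorm : ∀ n, ‖a n‖ ≤ ((n:ℝ)+1) ^ M := fun n => norm_coef_le lam n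
  -- summability of the series at any point of the unit ball
  have summable_at : ∀ z : ℂ, ‖z‖ < 1 → Summable (fun n => a n * z ^ n) := by
    intro z hz
    set r : ℝ := (‖z‖ + 1) / 2 with hr
    have hr0 : 0 < r := by positivity
    have hr1 : r < 1 := by rw [hr]; linarith
    have hzr : ‖z‖ ≤ r := by rw [hr]; linarith
    apply Summable.of_norm_bounded (aux_pow_geom M hr0 hr1)
    intro n
    rw [norm_mul, norm_pow]
    have : ‖z‖ ^ n ≤ r ^ n := pow_le_pow_left₀ (norm_nonneg z) hzr n
    exact mul_le_mul (hanorm n) this (by positivity) (by positivity)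
  -- derivative bound helper
  have derivBound : ∀ (r : ℝ), 0 < r → ∀ n (y : ℂ), ‖y‖ ≤ r →
      ‖a n * ((n:ℂ) * y ^ (n-1))‖ ≤ r⁻¹ * (((n:ℝ)+1) ^ (M+1) * r ^ n) := by
    intro r hr0 n y hy
    rw [norm_mul, norm_mul, norm_pow, Complex.norm_natCast]
    have hyp : ‖y‖ ^ (n-1) ≤ r ^ (n-1) := pow_le_pow_left₀ (norm_nonneg y) hy _
    have key : (n:ℝ) * r ^ (n-1) ≤ r⁻¹ * (((n:ℝ)+1) * r ^ n) := by
      cases n with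
      | zero => simp; positivity
      | succ m =>
          have : ((m+1:ℕ):ℝ) * r ^ m ≤ r⁻¹ * ((((m+1):ℕ):ℝ)+1) * r ^ (m+1) := by
            rw [pow_succ]
            have h1 : ((m+1:ℕ):ℝ) ≤ (((m+1):ℕ):ℝ)+1 := by linarith
            have : r⁻¹ * ((((m+1):ℕ):ℝ)+1) * (r ^ m * r) = ((((m+1):ℕ):ℝ)+1) * r ^ m := by
              field_simp
            rw [this]
            apply mul_le_mul_of_nonneg_right h1 (by positivity)
          simpa [mul_assoc] using this
    calc ‖a n‖ * ((n:ℝ) * ‖y‖ ^ (n-1))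
        ≤ ((n:ℝ)+1) ^ M * ((n:ℝ) * r ^ (n-1)) := by
          apply mul_le_mul (hanorm n) ?_ (by positivity) (by positivity)
          apply mul_le_mul_of_nonneg_left hyp (by positivity)
      _ ≤ ((n:ℝ)+1) ^ M * (r⁻¹ * (((n:ℝ)+1) * r ^ n)) := by
          apply mul_le_mul_of_nonneg_left key (by positivity)
      _ = r⁻¹ * (((n:ℝ)+1) ^ (M+1) * r ^ n) := by rw [pow_succ]; ring
  -- differentiability
  have hasDeriv : ∀ x : ℂ, ‖x‖ < 1 →
      HasDerivAt f (∑' n, a n * ((n:ℂ) * x ^ (n-1))) x := by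
    intro x hx
    set r : ℝ := (‖x‖ + 1) / 2 with hr
    have hr0 : 0 < r := by positivity
    have hr1 : r < 1 := by rw [hr]; linarith
    have hxr : ‖x‖ < r := by rw [hr]; linarith
    apply hasDerivAt_tsum_of_isPreconnected (𝕜 := ℂ)
      (u := fun (n:ℕ) => r⁻¹ * (((n:ℝ)+1) ^ (M+1) * r ^ n))
      ((aux_pow_geom (M+1) hr0 hr1).mul_left r⁻¹)
      Metric.isOpen_ball (convex_ball (0:ℂ) r).isPreconnected
      (g := fun (n : ℕ) (z : ℂ) => a n * z ^ n) (g' := fun (n : ℕ) (z : ℂ) => a n * ((n:ℂ) * z ^ (n-1)))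
      ?_ ?_ (y₀ := 0) ?_ ?_ ?_
    · intro n y _
      exact (hasDerivAt_pow n y).const_mul (a n)
    · intro n y hy
      exact derivBound r hr0 n y (le_of_lt (by simpa using Metric.mem_ball.1 hy))
    · simpa using hr0
    · exact summable_at 0 (by simp)
    · simpa using hxr
  -- the ODE: (1 - x) * f'(x) = lam * f x
  have ode : ∀ x : ℂ, ‖x‖ < 1 →
      (1 - x) * (∑' n, a n * ((n:ℂ) * x ^ (n-1))) = lam * f x := by
    intro x hx
    set r : ℝ := (‖x‖ + 1) / 2 with hr
    have hr0 : 0 < r := by positivity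
    have hr1 : r < 1 := by rw [hr]; linarith
    have hxr : ‖x‖ ≤ r := by rw [hr]; linarith
    have sD : Summable (fun n => a n * ((n:ℂ) * x ^ (n-1))) := by
      apply Summable.of_norm_bounded ((aux_pow_geom (M+1) hr0 hr1).mul_left r⁻¹)
      intro n
      exact derivBound r hr0 n x hxr
    have s1 : Summable (fun n => a n * ((n:ℂ) * x ^ n)) := by
      apply Summable.of_norm_bounded (aux_pow_geom (M+1) hr0 hr1)
      intro n
      rw [norm_mul, norm_mul, norm_pow, Complex.norm_natCast]
      have hyp : ‖x‖ ^ n ≤ r ^ n := pow_le_pow_left₀ (norm_nonneg x) hxr _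
      calc ‖a n‖ * ((n:ℝ) * ‖x‖ ^ n)
          ≤ ((n:ℝ)+1) ^ M * (((n:ℝ)+1) * r ^ n) := by
            apply mul_le_mul (hanorm n) ?_ (by positivity) (by positivity)
            apply mul_le_mul (by linarith) hyp (by positivity) (by positivity)
        _ = ((n:ℝ)+1) ^ (M+1) * r ^ n := by rw [pow_succ]; ring
    have s2 : Summable (fun n => lam * (a n * x ^ n)) := (summable_at x hx).mul_left lam
    set D := ∑' n, a n * ((n:ℂ) * x ^ (n-1)) with hD
    have key1 : D = ∑' n, (a n * ((n:ℂ) * x ^ n) + lam * (a n * x ^ n)) := by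
      rw [hD, sD.tsum_eq_zero_add]
      have h0 : a 0 * ((0:ℕ):ℂ) * x ^ (0-1) = 0 := by simp
      have hterm : ∀ n : ℕ, a (n+1) * (((n+1:ℕ):ℂ) * x ^ ((n+1)-1))
          = a n * ((n:ℂ) * x ^ n) + lam * (a n * x ^ n) := by
        intro n
        have hfac : (((n+1).factorial : ℕ) : ℂ) = ((n:ℂ)+1) * (n.factorial : ℂ) := by
          rw [Nat.factorial_succ]; push_cast; ring
        have hne : ((n.factorial : ℕ) : ℂ) ≠ 0 := Nat.cast_ne_zero.2 n.factorial_ne_zero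
        have hne1 : ((n:ℂ)+1) ≠ 0 := Nat.cast_add_one_ne_zero n
        simp only [ha, Nat.add_sub_cancel]
        rw [rf_succ, hfac]
        push_cast
        field_simp
        ring
      rw [show (∑' n, a (n+1) * (((n+1:ℕ):ℂ) * x ^ ((n+1)-1)))
          = ∑' n, (a n * ((n:ℂ) * x ^ n) + lam * (a n * x ^ n)) from tsum_congr hterm]
      simp
    have key2 : ∑' n, (a n * ((n:ℂ) * x ^ n) + lam * (a n * x ^ n))
        = x * D + lam * f x := by
      rw [s1.tsum_add s2]
      congr 1
      · rw [hD, ← tsum_mul_left]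
        apply tsum_congr
        intro n
        cases n with
        | zero => simp
        | succ m => simp only [Nat.add_sub_cancel]; push_cast; ring
      · rw [hf, ← tsum_mul_left]
    have : D = x * D + lam * f x := key1.trans key2
    linear_combination this
  -- constancy of (1-z)^lam * f z on the unit ball
  set F : ℂ → ℂ := fun z => (1 - z) ^ lam * f z with hFdef
  have hF : ∀ x ∈ Metric.ball (0:ℂ) 1, HasDerivAt F 0 x := by
    intro x hx
    rw [Metric.mem_ball, dist_zero_right] at hx
    have hone : (1 - x) ≠ 0 := by
      intro h
      have : ‖(1:ℂ) - x‖ = 0 := by rw [h, norm_zero]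
      have h1 : (1:ℝ) - ‖x‖ ≤ ‖(1:ℂ) - x‖ := by
        have := norm_sub_norm_le (1:ℂ) x
        simpa using this
      linarith
    have hslit : (1 - x) ∈ Complex.slitPlane := by
      rw [Complex.mem_slitPlane_iff]
      left
      have hre : x.re ≤ ‖x‖ := by
        calc x.re ≤ |x.re| := le_abs_self _
          _ ≤ ‖x‖ := Complex.abs_re_le_norm x
      simp only [Complex.sub_re, Complex.one_re]
      linarith
    have hinner : HasDerivAt (fun z : ℂ => 1 - z) (-1) x := by
      simpa using (hasDerivAt_id x).const_sub (1:ℂ)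
    have h1x : HasDerivAt (fun z : ℂ => (1 - z) ^ lam)
        (lam * (1 - x) ^ (lam - 1) * (-1)) x := hinner.cpow_const hslit
    have h2x := hasDeriv x hx
    have prod := h1x.mul h2x
    have hsplit : (1 - x) ^ lam = (1 - x) ^ (lam - 1) * (1 - x) := by
      conv_lhs => rw [show lam = (lam - 1) + 1 by ring]
      rw [Complex.cpow_add _ _ hone, Complex.cpow_one]
    have hval : lam * (1 - x) ^ (lam - 1) * (-1) * f x
        + (1 - x) ^ lam * (∑' n, a n * ((n:ℂ) * x ^ (n-1))) = 0 := by
      rw [hsplit]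
      linear_combination ((1 - x) ^ (lam - 1)) * ode x hx
    rw [hval] at prod
    exact prod
  have hconst : ∀ x ∈ Metric.ball (0:ℂ) 1, F x = F 0 := by
    intro x hx
    apply (convex_ball (0:ℂ) 1).is_const_of_fderivWithin_eq_zero
      (fun y hy => ((hF y hy).differentiableAt).differentiableWithinAt) ?_ hx (by simp)
    intro y hy
    rw [fderivWithin_of_isOpen Metric.isOpen_ball hy]
    have h := (hF y hy).hasFDerivAt.fderiv
    rw [h]
    ext z
    simp
  have hf0 : f 0 = 1 := by
    show (∑' n, a n * (0:ℂ) ^ n) = 1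
    rw [tsum_eq_single 0 (fun n hn => by simp [zero_pow hn])]
    simp [ha, risingFactorial]
  have hF0 : F 0 = 1 := by
    rw [hFdef]
    simp only [sub_zero, Complex.one_cpow, one_mul]
    exact hf0
  have hFt : (1 - t) ^ lam * f t = 1 := by
    have := hconst t (by rwa [Metric.mem_ball, dist_zero_right])
    rw [hF0] at this
    exact this
  have hft : f t = (1 - t) ^ (-lam) := by
    rw [Complex.cpow_neg]
    exact (eq_inv_of_mul_eq_one_left (by rw [mul_comm] at hFt; exact hFt)).symm ▸ rfl
  rw [← hft]
  exact (summable_at t ht).hasSum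

lemma hasSum_shift (lam t : ℂ) (ht : ‖t‖ < 1) (k : ℕ) :
    HasSum (fun n : ℕ => risingFactorial (-(n:ℂ)) k * risingFactorial lam n
        / (n.factorial : ℂ) * t ^ n)
      ((-1)^k * t^k * risingFactorial lam k * (1 - t) ^ (-(lam + k))) := by
  set g : ℕ → ℂ := fun n => risingFactorial (-(n:ℂ)) k * risingFactorial lam n
      / (n.factorial : ℂ) * t ^ n with hg
  have base := hasSum_binomial (lam + k) t ht
  have hC := base.mul_left ((-1:ℂ)^k * t^k * risingFactorial lam k)
  have hshift : ∀ r : ℕ, g (r + k)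
      = (-1:ℂ)^k * t^k * risingFactorial lam k
        * (risingFactorial (lam + k) r / (r.factorial : ℂ) * t ^ r) := by
    intro r
    have h1 : risingFactorial (-(((r+k):ℕ)):ℂ) k
        = (-1)^k * ((r+k).factorial : ℂ) / (r.factorial : ℂ) := rf_fact_div r k
    have h2 : risingFactorial lam (r + k) = risingFactorial lam k * risingFactorial (lam + k) r := by
      rw [show r + k = k + r from add_comm r k, rf_add]
    have hne : ((r+k).factorial : ℂ) ≠ 0 := Nat.cast_ne_zero.2 (r+k).factorial_ne_zero
    have hne2 : (r.factorial : ℂ) ≠ 0 := Nat.cast_ne_zero.2 r.factorial_ne_zero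
    rw [hg]
    simp only
    rw [h1, h2, pow_add]
    field_simp
  rw [show (fun r : ℕ => ((-1:ℂ)^k * t^k * risingFactorial lam k)
      * (risingFactorial (lam + k) r / (r.factorial : ℂ) * t ^ r))
      = fun r : ℕ => g (r + k) from funext fun r => (hshift r).symm] at hC
  have := (hasSum_nat_add_iff (f := g) k).1 hC
  have hzero : ∑ i ∈ Finset.range k, g i = 0 := by
    apply Finset.sum_eq_zero
    intro i hi
    rw [hg]
    simp only
    rw [rf_neg_nat_zero (Finset.mem_range.1 hi)]
    simp
  rw [hzero, add_zero] at this
  exact this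

/-- `∑_{n=0}^∞ B_m^j(−2n−1−j) ((λ)_n/n!) t^n
  = (1−t)^{−λ} ₃F₂(−m, m+1, λ; 1, j+1; −t/(1−t))` (terminating sum,
principal branch for `(1−t)^{−λ}`). -/
theorem pasternack_eval_genfun_lambda (m j : ℕ) (lam t : ℂ)
    (ht : ‖t‖ < 1 / 2) :
    ∑' n : ℕ, pasternackEval m j n * (risingFactorial lam n / (n.factorial : ℂ)) * t ^ n =
      (1 - t) ^ (-lam) *
        ∑ k ∈ Finset.range (m + 1),
          (risingFactorial (-(m : ℂ)) k * risingFactorial ((m : ℂ) + 1) k *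
            risingFactorial lam k /
            ((k.factorial : ℂ) * (k.factorial : ℂ) * risingFactorial ((j : ℂ) + 1) k)) *
            (-t / (1 - t)) ^ k := by
  have ht' : ‖t‖ < 1 := by
    linarith
  have hone : (1:ℂ) - t ≠ 0 := by
    intro h
    have : ‖(1:ℂ) - t‖ = 0 := by rw [h, norm_zero]
    have h1 : (1:ℝ) - ‖t‖ ≤ ‖(1:ℂ) - t‖ := by
      have := norm_sub_norm_le (1:ℂ) t
      simpa using this
    linarith
  set e : ℕ → ℂ := fun k => risingFactorial (-(m : ℂ)) k * risingFactorial ((m : ℂ) + 1) k /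
      ((k.factorial : ℂ) * (k.factorial : ℂ) * risingFactorial ((j : ℂ) + 1) k) with he
  have hpt : ∀ n : ℕ, pasternackEval m j n * (risingFactorial lam n / (n.factorial : ℂ)) * t ^ n
      = ∑ k ∈ Finset.range (m+1),
        e k * (risingFactorial (-(n:ℂ)) k * risingFactorial lam n / (n.factorial : ℂ) * t ^ n) := by
    intro n
    rw [pasternackEval, Finset.sum_mul, Finset.sum_mul]
    apply Finset.sum_congr rfl
    intro k _
    rw [he]
    ring
  have hks : ∀ k ∈ Finset.range (m+1),
      HasSum (fun n : ℕ => e k * (risingFactorial (-(n:ℂ)) k * risingFactorial lam n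
          / (n.factorial : ℂ) * t ^ n))
        (e k * ((-1)^k * t^k * risingFactorial lam k * (1 - t) ^ (-(lam + k)))) :=
    fun k _ => (hasSum_shift lam t ht' k).mul_left (e k)
  have total := hasSum_sum hks
  calc ∑' n : ℕ, pasternackEval m j n * (risingFactorial lam n / (n.factorial : ℂ)) * t ^ n
      = ∑' n : ℕ, ∑ k ∈ Finset.range (m+1),
          e k * (risingFactorial (-(n:ℂ)) k * risingFactorial lam n
            / (n.factorial : ℂ) * t ^ n) := tsum_congr hpt
    _ = ∑ k ∈ Finset.range (m+1),
          e k * ((-1)^k * t^k * risingFactorial lam k * (1 - t) ^ (-(lam + k))) := total.tsum_eq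
    _ = (1 - t) ^ (-lam) *
        ∑ k ∈ Finset.range (m + 1),
          (risingFactorial (-(m : ℂ)) k * risingFactorial ((m : ℂ) + 1) k *
            risingFactorial lam k /
            ((k.factorial : ℂ) * (k.factorial : ℂ) * risingFactorial ((j : ℂ) + 1) k)) *
            (-t / (1 - t)) ^ k := by
        rw [Finset.mul_sum]
        apply Finset.sum_congr rfl
        intro k _
        have hw : (1 - t) ^ (-(lam + (k:ℂ))) = (1 - t) ^ (-lam) * ((1 - t) ^ k)⁻¹ := by
          have hk : (1 - t) ^ (-(k:ℂ)) = ((1 - t) ^ k)⁻¹ := by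
            rw [Complex.cpow_neg, Complex.cpow_natCast]
          rw [neg_add, Complex.cpow_add _ _ hone, hk]
        have hp : (-t / (1 - t)) ^ k = (-1:ℂ)^k * t^k * ((1 - t) ^ k)⁻¹ := by
          rw [div_pow, neg_pow, div_eq_mul_inv]
        rw [hw, hp, he]
        ring
end

section
/- For natural number m and complex t, the Bateman polynomials satisfy ∑_{n=0}^∞ B_m(−2n−1) t^n/n! = e^t · Z_m(−t), where B_m(z) = ₃F₂(−m, m+1, (z+1)/2; 1, 1; 1) and Z_m(z) = ₂F₂(−m, m+1; 1, 1; z), i.e. ∑_{n=0}^∞ (∑_{k=0}^m ((−m)_k (m+1)_k (−n)_k/(k!)^3)) t^n/n! = e^t ∑_{k=0}^m ((−m)_k (m+1)_k/(k!)^3) (−t)^k. -/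
lemma rf_neg_zero_of_lt {n k : ℕ} (h : n < k) : risingFactorial (-(n : ℂ)) k = 0 := by
  apply Finset.prod_eq_zero (Finset.mem_range.2 h)
  simp

lemma rf_neg_add (k j : ℕ) :
    risingFactorial (-((j + k : ℕ) : ℂ)) k = (-1) ^ k * ((j + k).descFactorial k : ℂ) := by
  rw [risingFactorial, Nat.descFactorial_eq_prod_range, Nat.cast_prod]
  rw [Finset.prod_congr rfl (fun i hi => show (-((j + k : ℕ) : ℂ) + i) = (-1) * ((j + k - i : ℕ) : ℂ) by
    have hi' : i < k := Finset.mem_range.1 hi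
    rw [Nat.cast_sub (by omega)]
    push_cast; ring)]
  rw [Finset.prod_mul_distrib, Finset.prod_const, Finset.card_range]

lemma key_term (k j : ℕ) (t : ℂ) :
    risingFactorial (-((j + k : ℕ) : ℂ)) k * (t ^ (j + k) / ((j + k).factorial : ℂ)) =
      (-t) ^ k * (t ^ j / (j.factorial : ℂ)) := by
  rw [rf_neg_add]
  have hd : (j.factorial : ℂ) * ((j + k).descFactorial k : ℂ) = ((j + k).factorial : ℂ) := by
    have := Nat.factorial_mul_descFactorial (n := j + k) (k := k) (by omega)
    rw [show j + k - k = j by omega] at this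
    exact_mod_cast this
  have h1 : ((j + k).factorial : ℂ) ≠ 0 := Nat.cast_ne_zero.2 (Nat.factorial_ne_zero _)
  have h2 : (j.factorial : ℂ) ≠ 0 := Nat.cast_ne_zero.2 (Nat.factorial_ne_zero _)
  field_simp
  rw [← hd, pow_add, neg_pow]
  ring

/-- `∑_{n=0}^∞ B_m(−2n−1) t^n/n! = e^t Z_m(−t)`, where
`Z_m(−t) = ∑_{k=0}^m (−m)_k (m+1)_k (−t)^k/(k!)³`. -/
theorem bateman_eval_exp_genfun (m : ℕ) (t : ℂ) :
    ∑' n : ℕ, batemanEval m n * (t ^ n / (n.factorial : ℂ)) =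
      Complex.exp t *
        ∑ k ∈ Finset.range (m + 1),
          risingFactorial (-(m : ℂ)) k * risingFactorial ((m : ℂ) + 1) k *
            (-t) ^ k / ((k.factorial : ℂ)) ^ 3 := by
  have hexp : Summable fun n : ℕ => t ^ n / (n.factorial : ℂ) :=
    NormedSpace.expSeries_div_summable t
  have hexpval : Complex.exp t = ∑' n : ℕ, t ^ n / (n.factorial : ℂ) := by
    rw [Complex.exp_eq_exp_ℂ, NormedSpace.exp_eq_tsum_div]
  set c : ℕ → ℂ := fun k =>
    risingFactorial (-(m : ℂ)) k * risingFactorial ((m : ℂ) + 1) k / ((k.factorial : ℂ)) ^ 3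
    with hc
  set g : ℕ → ℕ → ℂ := fun k n =>
    c k * (risingFactorial (-(n : ℂ)) k * (t ^ n / (n.factorial : ℂ))) with hg
  have hshift : ∀ k j, g k (j + k) = (c k * (-t) ^ k) * (t ^ j / (j.factorial : ℂ)) := by
    intro k j
    rw [hg]; simp only []
    rw [key_term]; ring
  have hsum : ∀ k, Summable (g k) := by
    intro k
    rw [← summable_nat_add_iff k]
    simp only [hshift]
    exact hexp.mul_left _
  have htsum : ∀ k, ∑' n, g k n = c k * (-t) ^ k * Complex.exp t := by
    intro k
    rw [← Summable.sum_add_tsum_nat_add k (hsum k)]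
    have h0 : ∀ i ∈ Finset.range k, g k i = 0 := by
      intro i hi
      rw [hg]; simp only []
      rw [rf_neg_zero_of_lt (Finset.mem_range.1 hi)]; ring
    rw [Finset.sum_eq_zero h0, zero_add]
    simp only [hshift]
    rw [tsum_mul_left, ← hexpval]
  calc ∑' n : ℕ, batemanEval m n * (t ^ n / (n.factorial : ℂ))
      = ∑' n : ℕ, ∑ k ∈ Finset.range (m + 1), g k n := by
        congr 1; funext n
        rw [batemanEval, Finset.sum_mul]
        exact Finset.sum_congr rfl fun k _ => by rw [hg, hc]; ring
    _ = ∑ k ∈ Finset.range (m + 1), ∑' n, g k n :=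
        Summable.tsum_finsetSum fun k _ => hsum k
    _ = _ := by
        rw [Finset.mul_sum]
        exact Finset.sum_congr rfl fun k _ => by rw [htsum, hc]; ring
end
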